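/- arXiv:2301.04046 — 4 statements merged into one kernel-verified Lean document; each statement's English description precedes it below -/
import Mathlib

section
/- For every v ∈ H¹_{0,}(0,T) with ∂_t v = g ∈ L²(0,T), the function H_T v satisfies (H_T v)(t) = ∫_t^T (H_T^{-1} g)(s) ds for almost every t ∈ (0,T); equivalently, H_T v ∈ H¹_{,0}(0,T) and ∂_t(H_T v) = −H_T^{-1}(∂_t v) in L²(0,T). -/
open MeasureTheory Real Set
open scoped RealInnerProductSpace ENNReal

noncomputable section

/-- The measure on `(0,T)`. -/
def μT (T : ℝ) : Measure ℝ := volume.restrict (Set.Ioo 0 T)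

instance (T : ℝ) : IsFiniteMeasure (μT T) :=
  ⟨by simp [μT, Real.volume_Ioo]⟩

/-- `s_k(t) = √(2/T) sin((π/2 + kπ) t/T)`. -/
def sFun (T : ℝ) (k : ℕ) : ℝ → ℝ :=
  fun t => Real.sqrt (2 / T) * Real.sin ((Real.pi / 2 + k * Real.pi) * (t / T))

/-- `c_k(t) = √(2/T) cos((π/2 + kπ) t/T)`. -/
def cFun (T : ℝ) (k : ℕ) : ℝ → ℝ :=
  fun t => Real.sqrt (2 / T) * Real.cos ((Real.pi / 2 + k * Real.pi) * (t / T))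

lemma memLp_of_bounded_continuous {X : Type*} [NormedAddCommGroup X] {f : ℝ → X}
    (hf : Continuous f) (C : ℝ) (hC : ∀ t, ‖f t‖ ≤ C) (T : ℝ) :
    MemLp f 2 (μT T) :=
  MemLp.of_bound hf.aestronglyMeasurable C (ae_of_all _ hC)

lemma sFun_continuous (T : ℝ) (k : ℕ) : Continuous (sFun T k) := by
  unfold sFun; fun_prop

lemma cFun_continuous (T : ℝ) (k : ℕ) : Continuous (cFun T k) := by
  unfold cFun; fun_prop

lemma sFun_memLp (T : ℝ) (k : ℕ) : MemLp (sFun T k) 2 (μT T) := by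
  refine memLp_of_bounded_continuous (sFun_continuous T k) (Real.sqrt (2 / T)) (fun t => ?_) T
  rw [sFun, Real.norm_eq_abs, abs_mul, abs_of_nonneg (Real.sqrt_nonneg _)]
  exact mul_le_of_le_one_right (Real.sqrt_nonneg _) (Real.abs_sin_le_one _)

lemma cFun_memLp (T : ℝ) (k : ℕ) : MemLp (cFun T k) 2 (μT T) := by
  refine memLp_of_bounded_continuous (cFun_continuous T k) (Real.sqrt (2 / T)) (fun t => ?_) T
  rw [cFun, Real.norm_eq_abs, abs_mul, abs_of_nonneg (Real.sqrt_nonneg _)]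
  exact mul_le_of_le_one_right (Real.sqrt_nonneg _) (Real.abs_cos_le_one _)

/-- `s_k` as an element of `L²(0,T)`. -/
def sL (T : ℝ) (k : ℕ) : Lp ℝ 2 (μT T) := (sFun_memLp T k).toLp (sFun T k)

/-- `c_k` as an element of `L²(0,T)`. -/
def cL (T : ℝ) (k : ℕ) : Lp ℝ 2 (μT T) := (cFun_memLp T k).toLp (cFun T k)

/-- The modified Hilbert transformation `H_T` on `L²(0,T)`:
`H_T v = Σ_k ⟨v, s_k⟩ c_k`. -/
def HT (T : ℝ) (v : Lp ℝ 2 (μT T)) : Lp ℝ 2 (μT T) :=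
  ∑' k, (inner ℝ v (sL T k) : ℝ) • cL T k

/-- The inverse modified Hilbert transformation `H_T⁻¹` on `L²(0,T)`:
`H_T⁻¹ w = Σ_k ⟨w, c_k⟩ s_k`. -/
def HTinv (T : ℝ) (w : Lp ℝ 2 (μT T)) : Lp ℝ 2 (μT T) :=
  ∑' k, (inner ℝ w (cL T k) : ℝ) • sL T k

namespace HTaux

/-- frequency λ_k = π/2 + kπ -/
def lam (k : ℕ) : ℝ := Real.pi / 2 + k * Real.pi

lemma lam_pos (k : ℕ) : 0 < lam k := by
  have := Real.pi_pos
  have : (0:ℝ) ≤ k * Real.pi := by positivity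
  unfold lam; nlinarith [Real.pi_pos]

lemma lam_ne (k : ℕ) : lam k ≠ 0 := (lam_pos k).ne'

lemma cos_lam (k : ℕ) : Real.cos (lam k) = 0 := by
  unfold lam
  rw [add_comm, Real.cos_add_pi_div_two]
  simp [Real.sin_nat_mul_pi]

lemma sFun_eq (T : ℝ) (k : ℕ) (t : ℝ) :
    sFun T k t = Real.sqrt (2 / T) * Real.sin (lam k / T * t) := by
  unfold sFun lam; ring_nf

lemma cFun_eq (T : ℝ) (k : ℕ) (t : ℝ) :
    cFun T k t = Real.sqrt (2 / T) * Real.cos (lam k / T * t) := by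
  unfold cFun lam; ring_nf

/-- `∫_t^T s_k = (T/λ_k) c_k(t)` -/
lemma integral_sFun {T : ℝ} (hT : 0 < T) (k : ℕ) (t : ℝ) :
    ∫ s in t..T, sFun T k s = T / lam k * cFun T k t := by
  have hc : lam k / T ≠ 0 := div_ne_zero (lam_ne k) hT.ne'
  simp only [sFun_eq, intervalIntegral.integral_const_mul]
  rw [intervalIntegral.integral_comp_mul_left (fun x => Real.sin x) hc]
  have hT' : lam k / T * T = lam k := div_mul_cancel₀ _ hT.ne'
  rw [hT', integral_sin, cos_lam, cFun_eq]
  field_simp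
  ring

/-- `∫_0^t c_k = (T/λ_k) s_k(t)` -/
lemma integral_cFun {T : ℝ} (hT : 0 < T) (k : ℕ) (t : ℝ) :
    ∫ s in (0:ℝ)..t, cFun T k s = T / lam k * sFun T k t := by
  have hc : lam k / T ≠ 0 := div_ne_zero (lam_ne k) hT.ne'
  simp only [cFun_eq, intervalIntegral.integral_const_mul]
  rw [intervalIntegral.integral_comp_mul_left (fun x => Real.cos x) hc]
  rw [integral_cos]
  simp only [mul_zero, Real.sin_zero, sub_zero]
  rw [sFun_eq]
  field_simp
  ring

/-- `∫_0^T cos(c t/T) dt = T sin c / c` for `c ≠ 0`. -/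
lemma integral_cos_div {T : ℝ} (hT : 0 < T) {c : ℝ} (hc : c ≠ 0) :
    ∫ t in (0:ℝ)..T, Real.cos (c / T * t) = T * Real.sin c / c := by
  have hc' : c / T ≠ 0 := div_ne_zero hc hT.ne'
  rw [intervalIntegral.integral_comp_mul_left (fun x => Real.cos x) hc']
  rw [integral_cos]
  simp only [mul_zero, Real.sin_zero, sub_zero, div_mul_cancel₀ _ hT.ne']
  simp only [smul_eq_mul]
  field_simp


lemma cos_cos (x y : ℝ) :
    Real.cos x * Real.cos y = (Real.cos (x - y) + Real.cos (x + y)) / 2 := by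
  rw [Real.cos_add, Real.cos_sub]; ring

lemma sin_sin (x y : ℝ) :
    Real.sin x * Real.sin y = (Real.cos (x - y) - Real.cos (x + y)) / 2 := by
  rw [Real.cos_add, Real.cos_sub]; ring

lemma sq_sqrt2T {T : ℝ} (hT : 0 < T) :
    Real.sqrt (2 / T) * Real.sqrt (2 / T) = 2 / T :=
  Real.mul_self_sqrt (by positivity)

lemma intInt_cos (T : ℝ) (c : ℝ) :
    IntervalIntegrable (fun t => Real.cos (c / T * t)) MeasureTheory.volume 0 T :=
  (Real.continuous_cos.comp (continuous_const.mul continuous_id)).intervalIntegrable 0 T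

lemma core_diff {T : ℝ} (hT : 0 < T) (j k : ℕ) :
    ∫ t in (0:ℝ)..T, Real.cos ((lam j - lam k) / T * t) = if j = k then T else 0 := by
  by_cases hjk : j = k
  · subst hjk
    simp
  · have hdiff : lam j - lam k = ((j:ℝ) - k) * Real.pi := by unfold lam; push_cast; ring
    have hdne : lam j - lam k ≠ 0 := by
      rw [hdiff]
      refine mul_ne_zero (fun h => hjk ?_) Real.pi_ne_zero
      have : (j:ℝ) = k := by linarith [sub_eq_zero.mp h]
      exact_mod_cast this
    rw [integral_cos_div hT hdne, hdiff, if_neg hjk]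
    have : Real.sin (((j:ℝ) - k) * Real.pi) = 0 := by
      have := Real.sin_int_mul_pi ((j:ℤ) - k)
      push_cast at this ⊢
      convert this using 3 <;> push_cast <;> ring
    rw [this]; simp

lemma core_sum {T : ℝ} (hT : 0 < T) (j k : ℕ) :
    ∫ t in (0:ℝ)..T, Real.cos ((lam j + lam k) / T * t) = 0 := by
  have hsumne : lam j + lam k ≠ 0 := ne_of_gt (add_pos (lam_pos j) (lam_pos k))
  rw [integral_cos_div hT hsumne]
  have hsum : lam j + lam k = ((j:ℝ) + k + 1) * Real.pi := by unfold lam; ring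
  rw [hsum]
  have : Real.sin (((j:ℝ) + k + 1) * Real.pi) = 0 := by
    have := Real.sin_int_mul_pi ((j:ℤ) + k + 1)
    push_cast at this ⊢
    convert this using 3 <;> push_cast <;> ring
  rw [this]; simp

/-- `∫_0^T c_j c_k = δ_{jk}`. -/
lemma integral_cFun_mul_cFun {T : ℝ} (hT : 0 < T) (j k : ℕ) :
    ∫ t in (0:ℝ)..T, cFun T j t * cFun T k t = if j = k then 1 else 0 := by
  have key : ∀ t ∈ Set.uIcc (0:ℝ) T, cFun T j t * cFun T k t =
      2 / T * ((Real.cos ((lam j - lam k) / T * t) +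
        Real.cos ((lam j + lam k) / T * t)) / 2) := by
    intro t _
    rw [cFun_eq, cFun_eq, mul_mul_mul_comm, sq_sqrt2T hT, cos_cos]
    ring_nf
  rw [intervalIntegral.integral_congr key, intervalIntegral.integral_const_mul,
    intervalIntegral.integral_div,
    intervalIntegral.integral_add (intInt_cos T _) (intInt_cos T _),
    core_diff hT, core_sum hT]
  split_ifs <;> field_simp <;> ring

/-- `∫_0^T s_j s_k = δ_{jk}`. -/
lemma integral_sFun_mul_sFun {T : ℝ} (hT : 0 < T) (j k : ℕ) :
    ∫ t in (0:ℝ)..T, sFun T j t * sFun T k t = if j = k then 1 else 0 := by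
  have key : ∀ t ∈ Set.uIcc (0:ℝ) T, sFun T j t * sFun T k t =
      2 / T * ((Real.cos ((lam j - lam k) / T * t) -
        Real.cos ((lam j + lam k) / T * t)) / 2) := by
    intro t _
    rw [sFun_eq, sFun_eq, mul_mul_mul_comm, sq_sqrt2T hT, sin_sin]
    ring_nf
  rw [intervalIntegral.integral_congr key, intervalIntegral.integral_const_mul,
    intervalIntegral.integral_div,
    intervalIntegral.integral_sub (intInt_cos T _) (intInt_cos T _),
    core_diff hT, core_sum hT]
  split_ifs <;> field_simp <;> ring


/-- inner product of two `toLp`s as a set integral. -/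
lemma inner_toLp {T : ℝ} {f h : ℝ → ℝ} (hf : MemLp f 2 (μT T)) (hh : MemLp h 2 (μT T)) :
    (inner ℝ (hf.toLp f) (hh.toLp h) : ℝ) = ∫ t in Set.Ioo (0:ℝ) T, f t * h t := by
  calc (inner ℝ (hf.toLp f) (hh.toLp h) : ℝ)
      = ∫ a, (hf.toLp f : ℝ → ℝ) a * (hh.toLp h : ℝ → ℝ) a ∂(μT T) := by
        rw [MeasureTheory.L2.inner_def]; simp [RCLike.inner_apply]
        exact integral_congr_ae (ae_of_all _ fun a => mul_comm _ _)
    _ = ∫ a, f a * h a ∂(μT T) := by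
        refine integral_congr_ae ?_
        filter_upwards [hf.coeFn_toLp, hh.coeFn_toLp] with a e1 e2
        rw [e1, e2]
    _ = ∫ t in Set.Ioo (0:ℝ) T, f t * h t := rfl

lemma setIntegral_Ioo_eq_interval {T : ℝ} (hT : 0 ≤ T) (f : ℝ → ℝ) :
    ∫ t in Set.Ioo (0:ℝ) T, f t = ∫ t in (0:ℝ)..T, f t := by
  rw [intervalIntegral.integral_of_le hT, MeasureTheory.integral_Ioc_eq_integral_Ioo]

lemma orthonormal_cL {T : ℝ} (hT : 0 < T) : Orthonormal ℝ (cL T) := by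
  rw [orthonormal_iff_ite]
  intro j k
  rw [cL, cL, inner_toLp, setIntegral_Ioo_eq_interval hT.le,
    integral_cFun_mul_cFun hT]

lemma orthonormal_sL {T : ℝ} (hT : 0 < T) : Orthonormal ℝ (sL T) := by
  rw [orthonormal_iff_ite]
  intro j k
  rw [sL, sL, inner_toLp, setIntegral_Ioo_eq_interval hT.le,
    integral_sFun_mul_sFun hT]


lemma Iio_inter_Ioo {T t : ℝ} (ht : t ∈ Set.Ioo (0:ℝ) T) :
    Set.Iio t ∩ Set.Ioo 0 T = Set.Ioo 0 t := by
  ext x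
  simp only [Set.mem_inter_iff, Set.mem_Iio, Set.mem_Ioo]
  constructor
  · rintro ⟨h1, h2, _⟩; exact ⟨h2, h1⟩
  · rintro ⟨h1, h2⟩; exact ⟨h2, h1, h2.trans ht.2⟩

lemma Ioi_inter_Ioo {T s : ℝ} (hs : s ∈ Set.Ioo (0:ℝ) T) :
    Set.Ioi s ∩ Set.Ioo 0 T = Set.Ioo s T := by
  ext x
  simp only [Set.mem_inter_iff, Set.mem_Ioi, Set.mem_Ioo]
  constructor
  · rintro ⟨h1, _, h3⟩; exact ⟨h1, h3⟩
  · rintro ⟨h1, h2⟩; exact ⟨h1, hs.1.trans h1, h2⟩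

/-- key coefficient identity: `⟨v, s_k⟩ = (T/λ_k) ⟨g, c_k⟩`. -/
lemma inner_v_sL {T : ℝ} (hT : 0 < T) {v g : ℝ → ℝ} (hg : MemLp g 2 (μT T))
    (hv : ∀ t ∈ Set.Ioo (0:ℝ) T, v t = ∫ s in (0:ℝ)..t, g s)
    (hvL : MemLp v 2 (μT T)) (k : ℕ) :
    (inner ℝ (hvL.toLp v) (sL T k) : ℝ) = T / lam k * (inner ℝ (hg.toLp g) (cL T k) : ℝ) := by
  have hgi : Integrable g (μT T) := hg.integrable (by norm_num)
  have hsi : Integrable (sFun T k) (μT T) := (sFun_memLp T k).integrable (by norm_num)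
  set Q : ℝ × ℝ → ℝ :=
    fun p => Set.indicator {q : ℝ × ℝ | q.2 < q.1} (fun q => sFun T k q.1 * g q.2) p with hQdef
  have hQint : Integrable Q ((μT T).prod (μT T)) :=
    (hsi.mul_prod hgi).indicator (measurableSet_lt measurable_snd measurable_fst)
  have hswap : ∫ t, ∫ s, Q (t, s) ∂(μT T) ∂(μT T)
      = ∫ s, ∫ t, Q (t, s) ∂(μT T) ∂(μT T) :=
    MeasureTheory.integral_integral_swap (f := fun t s => Q (t, s)) hQint
  rw [sL, cL, inner_toLp, inner_toLp]
  have hL : ∫ t in Set.Ioo (0:ℝ) T, v t * sFun T k t = ∫ t, ∫ s, Q (t, s) ∂(μT T) ∂(μT T) := by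
    refine MeasureTheory.setIntegral_congr_fun measurableSet_Ioo (fun t ht => ?_)
    have h1 : (fun s => Q (t, s)) = Set.indicator (Set.Iio t) (fun s => sFun T k t * g s) := by
      funext s
      simp only [hQdef, Set.indicator_apply, Set.mem_setOf_eq, Set.mem_Iio]
    rw [h1, MeasureTheory.integral_indicator measurableSet_Iio]
    rw [show (μT T).restrict (Set.Iio t) = MeasureTheory.volume.restrict (Set.Iio t ∩ Set.Ioo 0 T) from
      MeasureTheory.Measure.restrict_restrict measurableSet_Iio]
    rw [Iio_inter_Ioo ht, MeasureTheory.integral_const_mul]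
    rw [hv t ht, intervalIntegral.integral_of_le ht.1.le,
      MeasureTheory.integral_Ioc_eq_integral_Ioo]
    ring
  have hR : ∫ s, ∫ t, Q (t, s) ∂(μT T) ∂(μT T)
      = ∫ s in Set.Ioo (0:ℝ) T, T / lam k * (g s * cFun T k s) := by
    refine MeasureTheory.setIntegral_congr_fun measurableSet_Ioo (fun s hs => ?_)
    have h1 : (fun t => Q (t, s)) = Set.indicator (Set.Ioi s) (fun t => sFun T k t * g s) := by
      funext t
      simp only [hQdef, Set.indicator_apply, Set.mem_setOf_eq, Set.mem_Ioi]
    rw [h1, MeasureTheory.integral_indicator measurableSet_Ioi]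
    rw [show (μT T).restrict (Set.Ioi s) = MeasureTheory.volume.restrict (Set.Ioi s ∩ Set.Ioo 0 T) from
      MeasureTheory.Measure.restrict_restrict measurableSet_Ioi]
    rw [Ioi_inter_Ioo hs, MeasureTheory.integral_mul_const]
    have : ∫ t in Set.Ioo s T, sFun T k t = T / lam k * cFun T k s := by
      rw [← MeasureTheory.integral_Ioc_eq_integral_Ioo,
        ← intervalIntegral.integral_of_le hs.2.le, integral_sFun hT]
    rw [this]
    ring
  rw [hL, hswap, hR, MeasureTheory.integral_const_mul]


/-- summability of orthonormal expansions with ℓ² coefficients. -/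
lemma summable_smul_orthonormal {E : Type*} [NormedAddCommGroup E] [InnerProductSpace ℝ E]
    [CompleteSpace E] {e : ℕ → E} (he : Orthonormal ℝ e) {a : ℕ → ℝ}
    (ha : Summable fun k => a k ^ 2) : Summable fun k => a k • e k := by
  have h := (he.orthogonalFamily.summable_iff_norm_sq_summable a).mpr (by
    simpa [Real.norm_eq_abs, sq_abs] using ha)
  simpa [LinearIsometry.toSpanSingleton_apply] using h

lemma inner_Lp_toLp {T : ℝ} (u : Lp ℝ 2 (μT T)) {h : ℝ → ℝ} (hh : MemLp h 2 (μT T)) :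
    (inner ℝ u (hh.toLp h) : ℝ) = ∫ a, (u : ℝ → ℝ) a * h a ∂(μT T) := by
  rw [MeasureTheory.L2.inner_def]
  refine integral_congr_ae ?_
  filter_upwards [hh.coeFn_toLp] with a e2
  simp [RCLike.inner_apply, e2]
  ring

/-- bound on integrals over subintervals via Cauchy–Schwarz. -/
lemma abs_setIntegral_le {T : ℝ} (hT : 0 < T) (u : Lp ℝ 2 (μT T)) {t : ℝ}
    (ht : t ∈ Set.Ioo (0:ℝ) T) :
    |∫ s in Set.Ioo t T, (u : ℝ → ℝ) s| ≤ Real.sqrt T * ‖u‖ := by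
  have hsub : Set.Ioo t T ⊆ Set.Ioo (0:ℝ) T := Set.Ioo_subset_Ioo ht.1.le le_rfl
  set χ : ℝ → ℝ := Set.indicator (Set.Ioo t T) (fun _ => (1:ℝ)) with hχdef
  have hχ : MemLp χ 2 (μT T) := by
    refine MemLp.of_bound ?_ 1 (ae_of_all _ fun s => ?_)
    · exact (aestronglyMeasurable_indicator_iff measurableSet_Ioo).mpr aestronglyMeasurable_const
    · rw [hχdef, Real.norm_eq_abs, Set.indicator_apply]
      split_ifs <;> norm_num
  have hrs : (μT T).restrict (Set.Ioo t T) = MeasureTheory.volume.restrict (Set.Ioo t T) := by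
    rw [μT, MeasureTheory.Measure.restrict_restrict measurableSet_Ioo,
      Set.inter_eq_self_of_subset_left hsub]
  have key : ∫ s in Set.Ioo t T, (u : ℝ → ℝ) s = (inner ℝ u (hχ.toLp χ) : ℝ) := by
    rw [inner_Lp_toLp]
    have : ∀ a, (u : ℝ → ℝ) a * χ a = Set.indicator (Set.Ioo t T) (u : ℝ → ℝ) a := by
      intro a
      rw [hχdef, Set.indicator_apply, Set.indicator_apply]
      split_ifs <;> ring
    simp_rw [this]
    rw [MeasureTheory.integral_indicator measurableSet_Ioo, hrs]
  have hχnorm : ‖hχ.toLp χ‖ ≤ Real.sqrt T := by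
    have h2 : ‖hχ.toLp χ‖ ^ 2 = (inner ℝ (hχ.toLp χ) (hχ.toLp χ) : ℝ) :=
      (real_inner_self_eq_norm_sq _).symm
    have h3 : (inner ℝ (hχ.toLp χ) (hχ.toLp χ) : ℝ) ≤ T := by
      rw [inner_toLp]
      have : ∀ a, χ a * χ a = Set.indicator (Set.Ioo t T) (fun _ => (1:ℝ)) a := by
        intro a
        rw [hχdef, Set.indicator_apply]
        split_ifs <;> ring
      simp_rw [this]
      rw [MeasureTheory.integral_indicator measurableSet_Ioo]
      rw [show (MeasureTheory.volume.restrict (Set.Ioo (0:ℝ) T)).restrict (Set.Ioo t T)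
          = MeasureTheory.volume.restrict (Set.Ioo t T) from
        by rw [MeasureTheory.Measure.restrict_restrict measurableSet_Ioo,
          Set.inter_eq_self_of_subset_left hsub]]
      simp only [MeasureTheory.integral_const, smul_eq_mul, mul_one,
        MeasureTheory.Measure.restrict_apply_univ]
      rw [measureReal_def, MeasureTheory.Measure.restrict_apply_univ, Real.volume_Ioo, ENNReal.toReal_ofReal_eq_iff.mpr]
      · linarith [ht.1]
      · linarith [ht.2]
    rw [show Real.sqrt T = Real.sqrt T * 1 from (mul_one _).symm]
    rw [← Real.sqrt_sq (norm_nonneg (hχ.toLp χ)), mul_one]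
    exact Real.sqrt_le_sqrt (h2 ▸ h3)
  calc |∫ s in Set.Ioo t T, (u : ℝ → ℝ) s| = |(inner ℝ u (hχ.toLp χ) : ℝ)| := by rw [key]
    _ ≤ ‖u‖ * ‖hχ.toLp χ‖ := abs_real_inner_le_norm _ _
    _ ≤ ‖u‖ * Real.sqrt T := by
        exact mul_le_mul_of_nonneg_left hχnorm (norm_nonneg _)
    _ = Real.sqrt T * ‖u‖ := mul_comm _ _

lemma coeFn_finset_sum {T : ℝ} (f : ℕ → Lp ℝ 2 (μT T)) (s : Finset ℕ) :
    (↑(∑ k ∈ s, f k) : ℝ → ℝ) =ᵐ[μT T] fun t => ∑ k ∈ s, (f k : ℝ → ℝ) t := by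
  classical
  induction s using Finset.induction_on with
  | empty =>
    simp only [Finset.sum_empty]
    exact MeasureTheory.Lp.coeFn_zero (E := ℝ) (p := 2) (μ := μT T)
  | insert a s' hx ih =>
      rw [Finset.sum_insert hx]
      filter_upwards [MeasureTheory.Lp.coeFn_add (f a) (∑ k ∈ s', f k), ih] with t h1 h2
      rw [h1]
      simp only [Pi.add_apply, h2, Finset.sum_insert hx]


end HTaux

open HTaux Filter
set_option maxHeartbeats 1600000 in
/-- For `v ∈ H¹_{0,}(0,T)` with `∂_t v = g ∈ L²(0,T)`, one has
`(H_T v)(t) = ∫_t^T (H_T⁻¹ g)(s) ds` for a.e. `t ∈ (0,T)`; i.e. `H_T v ∈ H¹_{,0}(0,T)`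
and `∂_t (H_T v) = - H_T⁻¹ (∂_t v)`. -/
theorem HT_commutes_with_derivative (T : ℝ) (hT : 0 < T) (v g : ℝ → ℝ)
    (hg : MemLp g 2 (μT T))
    (hv : ∀ t ∈ Set.Ioo (0 : ℝ) T, v t = ∫ s in (0 : ℝ)..t, g s)
    (hvL : MemLp v 2 (μT T)) :
    ∀ᵐ t ∂(μT T),
      (HT T (hvL.toLp v) : ℝ → ℝ) t = ∫ s in t..T, (HTinv T (hg.toLp g) : ℝ → ℝ) s := by
  classical
  set gL := hg.toLp g with hgLdef
  set vL := hvL.toLp v with hvLdef2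
  set w : ℝ → ℝ := (HTinv T gL : ℝ → ℝ) with hwdef
  set b : ℕ → ℝ := fun k => (inner ℝ gL (cL T k) : ℝ) with hbdef
  set a : ℕ → ℝ := fun k => (inner ℝ vL (sL T k) : ℝ) with hadef
  have hab : ∀ k, a k = T / lam k * b k := fun k => inner_v_sL hT hg hv hvL k
  -- summability of coefficients
  have hb_sum : Summable fun k => b k ^ 2 := by
    have h := (orthonormal_cL hT).inner_products_summable (x := gL)
    refine h.congr fun k => ?_
    rw [Real.norm_eq_abs, sq_abs, real_inner_comm]
  have ha_sum : Summable fun k => a k ^ 2 := by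
    refine Summable.of_nonneg_of_le (fun k => sq_nonneg _) (fun k => ?_)
      (hb_sum.mul_left ((2 * T / Real.pi) ^ 2))
    rw [hab k, mul_pow]
    have h1 : 0 < lam k := lam_pos k
    have hπ : 0 < Real.pi := Real.pi_pos
    have h2 : Real.pi / 2 ≤ lam k := by
      unfold lam
      nlinarith [Nat.cast_nonneg (α := ℝ) k]
    have h3 : T / lam k ≤ 2 * T / Real.pi := by
      rw [div_le_div_iff₀ h1 hπ]
      nlinarith
    have h4 : (T / lam k) ^ 2 ≤ (2 * T / Real.pi) ^ 2 := by
      apply pow_le_pow_left₀ (by positivity) h3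
    exact mul_le_mul_of_nonneg_right h4 (sq_nonneg (b k))
  have hsumc : Summable fun k => a k • cL T k :=
    summable_smul_orthonormal (orthonormal_cL hT) ha_sum
  have hsums : Summable fun k => b k • sL T k :=
    summable_smul_orthonormal (orthonormal_sL hT) hb_sum
  have hHT : HasSum (fun k => a k • cL T k) (HT T vL) := by
    rw [HT]; exact hsumc.hasSum
  have hInv : HasSum (fun k => b k • sL T k) (HTinv T gL) := by
    rw [HTinv]; exact hsums.hasSum
  set S : ℕ → Lp ℝ 2 (μT T) := fun N => ∑ k ∈ Finset.range N, a k • cL T k with hSdef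
  set P : ℕ → Lp ℝ 2 (μT T) := fun N => ∑ k ∈ Finset.range N, b k • sL T k with hPdef
  have hS_tend : Tendsto S atTop (nhds (HT T vL)) := hHT.tendsto_sum_nat
  have hP_tend : Tendsto P atTop (nhds (HTinv T gL)) := hInv.tendsto_sum_nat
  set ε : ℕ → ℝ := fun N => ‖HTinv T gL - P N‖ with hεdef
  have hε : Tendsto ε atTop (nhds 0) := by
    have h := tendsto_iff_norm_sub_tendsto_zero.mp hP_tend
    refine h.congr fun N => ?_
    rw [norm_sub_rev]
  -- integrability of w
  have hw2 : MemLp w 2 (μT T) := Lp.memLp _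
  have hwint : IntegrableOn w (Set.Ioo 0 T) volume := hw2.integrable (by norm_num)
  -- F and its basic properties
  set F : ℝ → ℝ := fun t => ∫ s in t..T, w s with hFdef
  have hF_eq : ∀ t ∈ Set.Ioo (0:ℝ) T, F t = ∫ s in Set.Ioo t T, w s := by
    intro t ht
    rw [hFdef]
    simp only
    rw [intervalIntegral.integral_of_le ht.2.le, MeasureTheory.integral_Ioc_eq_integral_Ioo]
  have hF_cont : ContinuousOn F (Set.Ioo 0 T) := by
    have h1 : IntegrableOn w (Set.uIcc 0 T) volume := by
      rw [Set.uIcc_of_le hT.le]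
      rwa [integrableOn_Icc_iff_integrableOn_Ioo]
    have h2 := intervalIntegral.continuousOn_primitive_interval_left h1
    refine h2.mono ?_
    rw [Set.uIcc_of_le hT.le]
    exact Set.Ioo_subset_Icc_self
  have hF_bound : ∀ t ∈ Set.Ioo (0:ℝ) T, |F t| ≤ Real.sqrt T * ‖HTinv T gL‖ := by
    intro t ht
    rw [hF_eq t ht]
    exact abs_setIntegral_le hT (HTinv T gL) ht
  have hF_mem : MemLp F 2 (μT T) := by
    refine MemLp.of_bound (hF_cont.aestronglyMeasurable measurableSet_Ioo)
      (Real.sqrt T * ‖HTinv T gL‖) ?_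
    have hae : ∀ᵐ t ∂(μT T), t ∈ Set.Ioo (0:ℝ) T :=
      MeasureTheory.ae_restrict_mem measurableSet_Ioo
    filter_upwards [hae] with t ht
    rw [Real.norm_eq_abs]
    exact hF_bound t ht
  -- pointwise description of partial sums
  set FN : ℕ → ℝ → ℝ := fun N t => ∑ k ∈ Finset.range N, a k * cFun T k t with hFNdef
  have hScoe : ∀ N, (↑(S N) : ℝ → ℝ) =ᵐ[μT T] FN N := by
    intro N
    have h1 := coeFn_finset_sum (fun k => a k • cL T k) (Finset.range N)
    have h2 : ∀ᵐ t ∂(μT T), ∀ k ∈ Finset.range N, (↑(a k • cL T k) : ℝ → ℝ) t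
        = a k * cFun T k t := by
      rw [Filter.eventually_all_finset]
      intro k _
      filter_upwards [Lp.coeFn_smul (a k) (cL T k), (cFun_memLp T k).coeFn_toLp] with t e1 e2
      rw [e1]
      simp only [Pi.smul_apply, smul_eq_mul]
      rw [show (↑(cL T k) : ℝ → ℝ) t = cFun T k t from e2]
    filter_upwards [h1, h2] with t e1 e2
    rw [e1]
    exact Finset.sum_congr rfl e2
  -- key: FN N t = ∫_{Ioo t T} coe (P N)
  have hFN_int : ∀ N, ∀ t ∈ Set.Ioo (0:ℝ) T,
      FN N t = ∫ s in Set.Ioo t T, (↑(P N) : ℝ → ℝ) s := by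
    intro N t ht
    have hrs : (μT T).restrict (Set.Ioo t T) = volume.restrict (Set.Ioo t T) := by
      rw [μT, MeasureTheory.Measure.restrict_restrict measurableSet_Ioo,
        Set.inter_eq_self_of_subset_left (Set.Ioo_subset_Ioo ht.1.le le_rfl)]
    have hPcoe : (↑(P N) : ℝ → ℝ) =ᵐ[volume.restrict (Set.Ioo t T)]
        fun s => ∑ k ∈ Finset.range N, b k * sFun T k s := by
      rw [← hrs]
      refine Filter.EventuallyEq.filter_mono ?_ (MeasureTheory.ae_mono
        MeasureTheory.Measure.restrict_le_self)
      have h1 := coeFn_finset_sum (fun k => b k • sL T k) (Finset.range N)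
      have h2 : ∀ᵐ s ∂(μT T), ∀ k ∈ Finset.range N, (↑(b k • sL T k) : ℝ → ℝ) s
          = b k * sFun T k s := by
        rw [Filter.eventually_all_finset]
        intro k _
        filter_upwards [Lp.coeFn_smul (b k) (sL T k), (sFun_memLp T k).coeFn_toLp] with s e1 e2
        rw [e1]
        simp only [Pi.smul_apply, smul_eq_mul]
        rw [show (↑(sL T k) : ℝ → ℝ) s = sFun T k s from e2]
      filter_upwards [h1, h2] with s e1 e2
      rw [e1]
      exact Finset.sum_congr rfl e2
    rw [MeasureTheory.integral_congr_ae hPcoe]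
    rw [MeasureTheory.integral_finset_sum _ (fun k _ => ?_)]
    · refine Finset.sum_congr rfl fun k _ => ?_
      rw [MeasureTheory.integral_const_mul]
      have : ∫ s in Set.Ioo t T, sFun T k s = T / lam k * cFun T k t := by
        rw [← MeasureTheory.integral_Ioc_eq_integral_Ioo,
          ← intervalIntegral.integral_of_le ht.2.le, integral_sFun hT]
      rw [this, hab k]
      ring
    · exact (((continuous_const.mul (sFun_continuous T k)).integrableOn_Icc).mono_set
        Set.Ioo_subset_Icc_self)
  -- uniform bound on FN - F
  have hFNF : ∀ N, ∀ t ∈ Set.Ioo (0:ℝ) T, |FN N t - F t| ≤ Real.sqrt T * ε N := by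
    intro N t ht
    have hrs : (μT T).restrict (Set.Ioo t T) = volume.restrict (Set.Ioo t T) := by
      rw [μT, MeasureTheory.Measure.restrict_restrict measurableSet_Ioo,
        Set.inter_eq_self_of_subset_left (Set.Ioo_subset_Ioo ht.1.le le_rfl)]
    have hPint : IntegrableOn (↑(P N) : ℝ → ℝ) (Set.Ioo t T) volume := by
      rw [IntegrableOn, ← hrs]
      exact ((Lp.memLp (P N)).integrable (by norm_num)).restrict
    have hwint' : IntegrableOn w (Set.Ioo t T) volume :=
      hwint.mono_set (Set.Ioo_subset_Ioo ht.1.le le_rfl)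
    have hdiff : FN N t - F t = ∫ s in Set.Ioo t T, ((↑(P N) : ℝ → ℝ) s - w s) := by
      rw [hFN_int N t ht, hF_eq t ht, MeasureTheory.integral_sub hPint hwint']
    have hcoe_sub : (↑(P N - HTinv T gL) : ℝ → ℝ) =ᵐ[volume.restrict (Set.Ioo t T)]
        fun s => (↑(P N) : ℝ → ℝ) s - w s := by
      rw [← hrs]
      exact (Lp.coeFn_sub (P N) (HTinv T gL)).filter_mono
        (MeasureTheory.ae_mono MeasureTheory.Measure.restrict_le_self)
    have : FN N t - F t = ∫ s in Set.Ioo t T, (↑(P N - HTinv T gL) : ℝ → ℝ) s := by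
      rw [hdiff, MeasureTheory.integral_congr_ae hcoe_sub]
    rw [this]
    calc |∫ s in Set.Ioo t T, (↑(P N - HTinv T gL) : ℝ → ℝ) s|
        ≤ Real.sqrt T * ‖P N - HTinv T gL‖ := abs_setIntegral_le hT _ ht
      _ = Real.sqrt T * ε N := by rw [hεdef, norm_sub_rev]
  -- norm estimate : ‖S N - toLp F‖ ≤ T * ε N
  have hSnorm : ∀ N, ‖S N - hF_mem.toLp F‖ ≤ T * ε N := by
    intro N
    have hDcoe : (↑(S N - hF_mem.toLp F) : ℝ → ℝ) =ᵐ[μT T] fun t => FN N t - F t := by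
      filter_upwards [Lp.coeFn_sub (S N) (hF_mem.toLp F), hScoe N, hF_mem.coeFn_toLp]
        with t e1 e2 e3
      rw [e1]
      simp only [Pi.sub_apply]
      rw [e2, e3]
    have hnormsq : ‖S N - hF_mem.toLp F‖ ^ 2 ≤ (T * ε N) ^ 2 := by
      rw [← real_inner_self_eq_norm_sq, MeasureTheory.L2.inner_def]
      have hεnn : 0 ≤ ε N := norm_nonneg _
      have hint : Integrable (fun t => (↑(S N - hF_mem.toLp F) : ℝ → ℝ) t * (↑(S N - hF_mem.toLp F) : ℝ → ℝ) t) (μT T) := by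
        have := (Lp.memLp (S N - hF_mem.toLp F)).integrable_sq
        refine this.congr (ae_of_all _ fun t => ?_)
        exact sq _
      calc ∫ t, (inner ℝ ((↑(S N - hF_mem.toLp F) : ℝ → ℝ) t) ((↑(S N - hF_mem.toLp F) : ℝ → ℝ) t) : ℝ) ∂(μT T)
          = ∫ t, (↑(S N - hF_mem.toLp F) : ℝ → ℝ) t * (↑(S N - hF_mem.toLp F) : ℝ → ℝ) t ∂(μT T) := by
            refine MeasureTheory.integral_congr_ae (ae_of_all _ fun t => ?_)
            simp [RCLike.inner_apply]
            exact sq _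
        _ ≤ ∫ _, (Real.sqrt T * ε N) ^ 2 ∂(μT T) := by
            refine MeasureTheory.integral_mono_ae hint (MeasureTheory.integrable_const _) ?_
            filter_upwards [hDcoe, MeasureTheory.ae_restrict_mem measurableSet_Ioo]
              with t e1 ht
            rw [e1]
            have h1 := hFNF N t ht
            nlinarith [abs_nonneg (FN N t - F t), sq_abs (FN N t - F t)]
        _ = (Real.sqrt T * ε N) ^ 2 * T := by
            rw [MeasureTheory.integral_const, smul_eq_mul, mul_comm]
            congr 1
            rw [μT, measureReal_def, MeasureTheory.Measure.restrict_apply_univ, Real.volume_Ioo]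
            simp [hT.le]
        _ = (T * ε N) ^ 2 := by
            rw [mul_pow, mul_pow, Real.sq_sqrt hT.le]
            ring
    have hTε : 0 ≤ T * ε N := mul_nonneg hT.le (norm_nonneg _)
    nlinarith [norm_nonneg (S N - hF_mem.toLp F)]
  -- conclude S → toLp F, hence HT vL = toLp F
  have hS_tendF : Tendsto S atTop (nhds (hF_mem.toLp F)) := by
    rw [tendsto_iff_norm_sub_tendsto_zero]
    refine squeeze_zero (fun N => norm_nonneg _) hSnorm ?_
    have h0 := hε.const_mul T
    rw [mul_zero] at h0
    exact h0
  have hEq : HT T vL = hF_mem.toLp F := tendsto_nhds_unique hS_tend hS_tendF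
  have : (↑(HT T vL) : ℝ → ℝ) =ᵐ[μT T] F := by
    rw [hEq]
    exact hF_mem.coeFn_toLp
  filter_upwards [this] with t ht
  rw [ht]

end
end

section
/- H_T maps H¹_{0,}(0,T) bijectively onto H¹_{,0}(0,T) and preserves the H¹ seminorm: for every v ∈ H¹_{0,}(0,T), H_T v ∈ H¹_{,0}(0,T) with ‖∂_t(H_T v)‖_{L²(0,T)} = ‖∂_t v‖_{L²(0,T)}, and every element of H¹_{,0}(0,T) is of the form H_T v for a unique v ∈ H¹_{0,}(0,T). -/
open MeasureTheory Real Set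
open scoped RealInnerProductSpace ENNReal

noncomputable section

/-- The subspace `H¹_{0,}(0,T)` of `L²(0,T)`: elements `v` with
`v(t) = ∫₀ᵗ g(s) ds` for some `g ∈ L²(0,T)`. -/
def H1zero (T : ℝ) : Set (Lp ℝ 2 (μT T)) :=
  {v | ∃ g : Lp ℝ 2 (μT T),
    ∀ᵐ t ∂(μT T), (v : ℝ → ℝ) t = ∫ s in (0 : ℝ)..t, (g : ℝ → ℝ) s}

/-- The subspace `H¹_{,0}(0,T)` of `L²(0,T)`: elements `w` with
`w(t) = ∫_t^T h(s) ds` for some `h ∈ L²(0,T)`. -/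
def H1terminal (T : ℝ) : Set (Lp ℝ 2 (μT T)) :=
  {w | ∃ h : Lp ℝ 2 (μT T),
    ∀ᵐ t ∂(μT T), (w : ℝ → ℝ) t = ∫ s in t..T, (h : ℝ → ℝ) s}


/-! ### Auxiliary development -/

def lam (k : ℕ) : ℝ := Real.pi / 2 + k * Real.pi

lemma lam_pos (k : ℕ) : 0 < lam k := by
  have h : (0:ℝ) ≤ k * Real.pi := by positivity
  unfold lam; nlinarith [Real.pi_pos]

lemma lam_ne (k : ℕ) : lam k ≠ 0 := ne_of_gt (lam_pos k)

lemma cos_lam (k : ℕ) : Real.cos (lam k) = 0 := by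
  unfold lam
  rw [Real.cos_add]
  simp [Real.sin_nat_mul_pi]

lemma sFun_eq (T : ℝ) (k : ℕ) (t : ℝ) :
    sFun T k t = Real.sqrt (2/T) * Real.sin (lam k / T * t) := by
  unfold sFun lam; ring_nf

lemma cFun_eq (T : ℝ) (k : ℕ) (t : ℝ) :
    cFun T k t = Real.sqrt (2/T) * Real.cos (lam k / T * t) := by
  unfold cFun lam; ring_nf

lemma int_cos_mul {c : ℝ} (hc : c ≠ 0) (A B : ℝ) :
    ∫ t in A..B, Real.cos (c * t) = (Real.sin (c*B) - Real.sin (c*A))/c := by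
  rw [intervalIntegral.integral_comp_mul_left (fun x => Real.cos x) hc]
  simp [integral_cos]; ring

lemma sin_mul_sin' (x y : ℝ) :
    Real.sin x * Real.sin y = (Real.cos (x - y) - Real.cos (x + y))/2 := by
  rw [Real.cos_sub, Real.cos_add]; ring

lemma cos_mul_cos' (x y : ℝ) :
    Real.cos x * Real.cos y = (Real.cos (x - y) + Real.cos (x + y))/2 := by
  rw [Real.cos_sub, Real.cos_add]; ring

lemma integral_ss {T : ℝ} (hT : 0 < T) (j k : ℕ) :
    ∫ t in (0:ℝ)..T, Real.sin (lam j / T * t) * Real.sin (lam k / T * t)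
      = if j = k then T/2 else 0 := by
  have hT' : T ≠ 0 := ne_of_gt hT
  have hint : ∀ c : ℝ, IntervalIntegrable (fun t => Real.cos (c * t)) volume 0 T := by
    intro c; exact (Real.continuous_cos.comp (continuous_const.mul continuous_id)).intervalIntegrable _ _
  have hsum : (lam j + lam k)/T ≠ 0 := by
    have := lam_pos j; have := lam_pos k; positivity
  have hsumT : Real.sin ((lam j + lam k)/T * T) = 0 := by
    have h1 : (lam j + lam k)/T * T = ((j + k + 1 : ℕ) : ℝ) * Real.pi := by
      field_simp [lam]; unfold lam; push_cast; ring
    rw [h1, Real.sin_nat_mul_pi]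
  have hrw : ∀ t : ℝ, Real.sin (lam j / T * t) * Real.sin (lam k / T * t)
      = (Real.cos ((lam j - lam k)/T * t) - Real.cos ((lam j + lam k)/T * t))/2 := by
    intro t
    rw [sin_mul_sin']
    ring_nf
  rw [intervalIntegral.integral_congr (fun t _ => hrw t)]
  have hsplit : ∫ t in (0:ℝ)..T,
      (Real.cos ((lam j - lam k)/T * t) - Real.cos ((lam j + lam k)/T * t))/2
      = ((∫ t in (0:ℝ)..T, Real.cos ((lam j - lam k)/T * t))
        - ∫ t in (0:ℝ)..T, Real.cos ((lam j + lam k)/T * t))/2 := by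
    rw [intervalIntegral.integral_div, intervalIntegral.integral_sub (hint _) (hint _)]
  rw [hsplit, int_cos_mul hsum]
  rw [hsumT]
  by_cases h : j = k
  · subst h
    have h0 : (lam j - lam j)/T = 0 := by simp
    rw [h0]
    simp [hT']
  · have hdiff : (lam j - lam k)/T ≠ 0 := by
      have h0 : lam j - lam k = ((j:ℤ) - k) * Real.pi := by unfold lam; push_cast; ring
      rw [h0]
      have hjk : ((j:ℝ)) ≠ (k:ℝ) := by exact_mod_cast h
      exact div_ne_zero (mul_ne_zero (by push_cast; exact sub_ne_zero.mpr hjk) Real.pi_ne_zero) hT'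
    rw [int_cos_mul hdiff]
    have hdT : Real.sin ((lam j - lam k)/T * T) = 0 := by
      have h1 : (lam j - lam k)/T * T = ((j : ℤ) - k : ℤ) * Real.pi := by
        field_simp [lam]; unfold lam; push_cast; ring
      rw [h1, Real.sin_int_mul_pi]
    rw [hdT]
    simp [h]

lemma integral_cc {T : ℝ} (hT : 0 < T) (j k : ℕ) :
    ∫ t in (0:ℝ)..T, Real.cos (lam j / T * t) * Real.cos (lam k / T * t)
      = if j = k then T/2 else 0 := by
  have hT' : T ≠ 0 := ne_of_gt hT
  have hint : ∀ c : ℝ, IntervalIntegrable (fun t => Real.cos (c * t)) volume 0 T := by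
    intro c; exact (Real.continuous_cos.comp (continuous_const.mul continuous_id)).intervalIntegrable _ _
  have hsum : (lam j + lam k)/T ≠ 0 := by
    have := lam_pos j; have := lam_pos k; positivity
  have hsumT : Real.sin ((lam j + lam k)/T * T) = 0 := by
    have h1 : (lam j + lam k)/T * T = ((j + k + 1 : ℕ) : ℝ) * Real.pi := by
      field_simp [lam]; unfold lam; push_cast; ring
    rw [h1, Real.sin_nat_mul_pi]
  have hrw : ∀ t : ℝ, Real.cos (lam j / T * t) * Real.cos (lam k / T * t)
      = (Real.cos ((lam j - lam k)/T * t) + Real.cos ((lam j + lam k)/T * t))/2 := by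
    intro t; rw [cos_mul_cos']; ring_nf
  rw [intervalIntegral.integral_congr (fun t _ => hrw t)]
  have hsplit : ∫ t in (0:ℝ)..T,
      (Real.cos ((lam j - lam k)/T * t) + Real.cos ((lam j + lam k)/T * t))/2
      = ((∫ t in (0:ℝ)..T, Real.cos ((lam j - lam k)/T * t))
        + ∫ t in (0:ℝ)..T, Real.cos ((lam j + lam k)/T * t))/2 := by
    rw [intervalIntegral.integral_div, intervalIntegral.integral_add (hint _) (hint _)]
  rw [hsplit, int_cos_mul hsum, hsumT]
  by_cases h : j = k
  · subst h
    have h0 : (lam j - lam j)/T = 0 := by simp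
    rw [h0]
    simp [hT']
  · have hdiff : (lam j - lam k)/T ≠ 0 := by
      have h0 : lam j - lam k = ((j:ℤ) - k) * Real.pi := by unfold lam; push_cast; ring
      rw [h0]
      have hjk : ((j:ℝ)) ≠ (k:ℝ) := by exact_mod_cast h
      exact div_ne_zero (mul_ne_zero (by push_cast; exact sub_ne_zero.mpr hjk) Real.pi_ne_zero) hT'
    rw [int_cos_mul hdiff]
    have hdT : Real.sin ((lam j - lam k)/T * T) = 0 := by
      have h1 : (lam j - lam k)/T * T = ((j : ℤ) - k : ℤ) * Real.pi := by
        field_simp [lam]; unfold lam; push_cast; ring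
      rw [h1, Real.sin_int_mul_pi]
    rw [hdT]
    simp [h]

lemma inner_toLp (T : ℝ) (f g : ℝ → ℝ) (hf : MemLp f 2 (μT T)) (hg : MemLp g 2 (μT T)) :
    (inner ℝ (hf.toLp f) (hg.toLp g) : ℝ) = ∫ t in Set.Ioo 0 T, f t * g t := by
  rw [MeasureTheory.L2.inner_def]
  have h1 : ∀ᵐ t ∂(μT T), (inner ℝ ((hf.toLp f : Lp ℝ 2 (μT T)) t) ((hg.toLp g : Lp ℝ 2 (μT T)) t) : ℝ)
      = f t * g t := by
    filter_upwards [hf.coeFn_toLp, hg.coeFn_toLp] with t h1 h2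
    rw [h1, h2, RCLike.inner_apply]
    simp; ring
  rw [MeasureTheory.integral_congr_ae h1]
  rfl

lemma setIntegral_Ioo_eq_intervalIntegral {f : ℝ → ℝ} {a b : ℝ} (h : a ≤ b) :
    ∫ t in Set.Ioo a b, f t = ∫ t in a..b, f t := by
  rw [intervalIntegral.integral_of_le h, MeasureTheory.integral_Ioc_eq_integral_Ioo]

lemma sqrt_mul_self' {T : ℝ} (hT : 0 < T) : Real.sqrt (2/T) * Real.sqrt (2/T) = 2/T :=
  Real.mul_self_sqrt (by positivity)

lemma inner_sL_sL {T : ℝ} (hT : 0 < T) (j k : ℕ) :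
    (inner ℝ (sL T j) (sL T k) : ℝ) = if j = k then 1 else 0 := by
  rw [sL, sL, inner_toLp]
  have hrw : ∀ t, sFun T j t * sFun T k t
      = (2/T) * (Real.sin (lam j / T * t) * Real.sin (lam k / T * t)) := by
    intro t; rw [sFun_eq, sFun_eq]
    rw [show Real.sqrt (2/T) * Real.sin (lam j / T * t) * (Real.sqrt (2/T) * Real.sin (lam k / T * t))
      = (Real.sqrt (2/T) * Real.sqrt (2/T)) * (Real.sin (lam j / T * t) * Real.sin (lam k / T * t)) by ring,
      sqrt_mul_self' hT]
  simp_rw [hrw]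
  rw [MeasureTheory.integral_const_mul, setIntegral_Ioo_eq_intervalIntegral hT.le, integral_ss hT]
  split_ifs <;> field_simp <;> simp

lemma inner_cL_cL {T : ℝ} (hT : 0 < T) (j k : ℕ) :
    (inner ℝ (cL T j) (cL T k) : ℝ) = if j = k then 1 else 0 := by
  rw [cL, cL, inner_toLp]
  have hrw : ∀ t, cFun T j t * cFun T k t
      = (2/T) * (Real.cos (lam j / T * t) * Real.cos (lam k / T * t)) := by
    intro t; rw [cFun_eq, cFun_eq]
    rw [show Real.sqrt (2/T) * Real.cos (lam j / T * t) * (Real.sqrt (2/T) * Real.cos (lam k / T * t))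
      = (Real.sqrt (2/T) * Real.sqrt (2/T)) * (Real.cos (lam j / T * t) * Real.cos (lam k / T * t)) by ring,
      sqrt_mul_self' hT]
  simp_rw [hrw]
  rw [MeasureTheory.integral_const_mul, setIntegral_Ioo_eq_intervalIntegral hT.le, integral_cc hT]
  split_ifs <;> field_simp <;> simp

lemma orthonormal_sL {T : ℝ} (hT : 0 < T) : Orthonormal ℝ (sL T) :=
  orthonormal_iff_ite.mpr (fun j k => inner_sL_sL hT j k)

lemma orthonormal_cL {T : ℝ} (hT : 0 < T) : Orthonormal ℝ (cL T) :=
  orthonormal_iff_ite.mpr (fun j k => inner_cL_cL hT j k)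

lemma lam_succ (k : ℕ) : lam (k+1) = lam k + Real.pi := by unfold lam; push_cast; ring

lemma trig_step_sin (T t : ℝ) (k : ℕ) :
    Real.sin (lam k / T * t) * Real.cos (Real.pi/T*t)
      = (Real.sin (lam (k+1)/T*t)
        + (if k = 0 then -Real.sin (lam 0/T*t) else Real.sin (lam (k-1)/T*t)))/2 := by
  have key : ∀ x y : ℝ, Real.sin x * Real.cos y = (Real.sin (x+y) + Real.sin (x-y))/2 := by
    intro x y; rw [Real.sin_add, Real.sin_sub]; ring
  rw [key]
  have h1 : lam k / T * t + Real.pi/T*t = lam (k+1)/T*t := by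
    rw [lam_succ]; ring
  rw [h1]
  cases k with
  | zero =>
    have h2 : lam 0 / T * t - Real.pi/T*t = -(lam 0/T*t) := by
      unfold lam; push_cast; ring
    rw [h2, Real.sin_neg]
    simp
  | succ j =>
    have h2 : lam (j+1) / T * t - Real.pi/T*t = lam j/T*t := by
      rw [lam_succ]; ring
    rw [h2]
    simp

lemma trig_step_cos (T t : ℝ) (k : ℕ) :
    Real.cos (lam k / T * t) * Real.cos (Real.pi/T*t)
      = (Real.cos (lam (k+1)/T*t)
        + (if k = 0 then Real.cos (lam 0/T*t) else Real.cos (lam (k-1)/T*t)))/2 := by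
  have key : ∀ x y : ℝ, Real.cos x * Real.cos y = (Real.cos (x+y) + Real.cos (x-y))/2 := by
    intro x y; rw [Real.cos_add, Real.cos_sub]; ring
  rw [key]
  have h1 : lam k / T * t + Real.pi/T*t = lam (k+1)/T*t := by
    rw [lam_succ]; ring
  rw [h1]
  cases k with
  | zero =>
    have h2 : lam 0 / T * t - Real.pi/T*t = -(lam 0/T*t) := by
      unfold lam; push_cast; ring
    rw [h2, Real.cos_neg]
    simp
  | succ j =>
    have h2 : lam (j+1) / T * t - Real.pi/T*t = lam j/T*t := by
      rw [lam_succ]; ring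
    rw [h2]
    simp

lemma Lp_integrable {T : ℝ} (f : Lp ℝ 2 (μT T)) : Integrable (f : ℝ → ℝ) (μT T) :=
  (MeasureTheory.Lp.memLp f).integrable (by norm_num)

lemma integrable_f_mul {T : ℝ} (f : Lp ℝ 2 (μT T)) {ψ : ℝ → ℝ} (hψc : Continuous ψ)
    (C : ℝ) (hC : ∀ t, ‖ψ t‖ ≤ C) :
    Integrable (fun t => (f : ℝ → ℝ) t * ψ t) (μT T) := by
  have := (Lp_integrable f).bdd_mul (hψc.aestronglyMeasurable) (ae_of_all _ hC)
  simpa [mul_comm] using this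

lemma vanish_mul_pow_sin {T : ℝ} (f : Lp ℝ 2 (μT T))
    (h : ∀ k, ∫ t, (f : ℝ → ℝ) t * Real.sin (lam k/T*t) ∂(μT T) = 0) :
    ∀ m k, ∫ t, (f : ℝ → ℝ) t * (Real.sin (lam k/T*t) * Real.cos (Real.pi/T*t)^m) ∂(μT T) = 0 := by
  have hint : ∀ k m, Integrable
      (fun t => (f : ℝ → ℝ) t * (Real.sin (lam k/T*t) * Real.cos (Real.pi/T*t)^m)) (μT T) := by
    intro k m
    refine integrable_f_mul f (by fun_prop) 1 (fun t => ?_)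
    rw [norm_mul, norm_pow, Real.norm_eq_abs, Real.norm_eq_abs]
    have h1 := Real.abs_sin_le_one (lam k/T*t)
    have h2 : |Real.cos (Real.pi/T*t)|^m ≤ 1 :=
      pow_le_one₀ (abs_nonneg _) (Real.abs_cos_le_one _)
    calc |Real.sin (lam k/T*t)| * |Real.cos (Real.pi/T*t)|^m ≤ 1 * 1 :=
          mul_le_mul h1 h2 (by positivity) one_pos.le
      _ = 1 := by norm_num
  intro m
  induction m with
  | zero => intro k; simpa using h k
  | succ m ih =>
    intro k
    have hrw : ∀ t : ℝ, (f : ℝ → ℝ) t * (Real.sin (lam k/T*t) * Real.cos (Real.pi/T*t)^(m+1))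
        = ((f : ℝ → ℝ) t * (Real.sin (lam (k+1)/T*t) * Real.cos (Real.pi/T*t)^m)
          + (if k = 0 then (-1:ℝ) else 1) * ((f : ℝ → ℝ) t
              * (Real.sin (lam (k-1)/T*t) * Real.cos (Real.pi/T*t)^m)))/2 := by
      intro t
      have h0 : Real.sin (lam k/T*t) * Real.cos (Real.pi/T*t)^(m+1)
          = (Real.sin (lam k/T*t) * Real.cos (Real.pi/T*t)) * Real.cos (Real.pi/T*t)^m := by
        ring
      rw [h0, trig_step_sin]
      by_cases hk : k = 0
      · subst hk; simp; ring
      · simp [hk]; ring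
    simp_rw [hrw]
    rw [MeasureTheory.integral_div, MeasureTheory.integral_add (hint _ _)
      (((hint _ _).const_mul _)), MeasureTheory.integral_const_mul, ih, ih]
    simp

lemma vanish_mul_pow_cos {T : ℝ} (f : Lp ℝ 2 (μT T))
    (h : ∀ k, ∫ t, (f : ℝ → ℝ) t * Real.cos (lam k/T*t) ∂(μT T) = 0) :
    ∀ m k, ∫ t, (f : ℝ → ℝ) t * (Real.cos (lam k/T*t) * Real.cos (Real.pi/T*t)^m) ∂(μT T) = 0 := by
  have hint : ∀ k m, Integrable
      (fun t => (f : ℝ → ℝ) t * (Real.cos (lam k/T*t) * Real.cos (Real.pi/T*t)^m)) (μT T) := by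
    intro k m
    refine integrable_f_mul f (by fun_prop) 1 (fun t => ?_)
    rw [norm_mul, norm_pow, Real.norm_eq_abs, Real.norm_eq_abs]
    have h1 := Real.abs_cos_le_one (lam k/T*t)
    have h2 : |Real.cos (Real.pi/T*t)|^m ≤ 1 :=
      pow_le_one₀ (abs_nonneg _) (Real.abs_cos_le_one _)
    calc |Real.cos (lam k/T*t)| * |Real.cos (Real.pi/T*t)|^m ≤ 1 * 1 :=
          mul_le_mul h1 h2 (by positivity) one_pos.le
      _ = 1 := by norm_num
  intro m
  induction m with
  | zero => intro k; simpa using h k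
  | succ m ih =>
    intro k
    have hrw : ∀ t : ℝ, (f : ℝ → ℝ) t * (Real.cos (lam k/T*t) * Real.cos (Real.pi/T*t)^(m+1))
        = ((f : ℝ → ℝ) t * (Real.cos (lam (k+1)/T*t) * Real.cos (Real.pi/T*t)^m)
          + ((f : ℝ → ℝ) t * (Real.cos (lam (k-1)/T*t) * Real.cos (Real.pi/T*t)^m)))/2 := by
      intro t
      have h0 : Real.cos (lam k/T*t) * Real.cos (Real.pi/T*t)^(m+1)
          = (Real.cos (lam k/T*t) * Real.cos (Real.pi/T*t)) * Real.cos (Real.pi/T*t)^m := by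
        ring
      rw [h0, trig_step_cos]
      by_cases hk : k = 0
      · subst hk; simp; ring
      · simp [hk]; ring
    simp_rw [hrw]
    rw [MeasureTheory.integral_div, MeasureTheory.integral_add (hint _ _) (hint _ _), ih, ih]
    simp

lemma inner_Lp_eq {T : ℝ} (f g : Lp ℝ 2 (μT T)) :
    (inner ℝ f g : ℝ) = ∫ t, (f : ℝ → ℝ) t * (g : ℝ → ℝ) t ∂(μT T) := by
  rw [MeasureTheory.L2.inner_def]
  refine MeasureTheory.integral_congr_ae (Filter.Eventually.of_forall fun t => ?_)
  simp [RCLike.inner_apply]; ring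

lemma inner_Lp_toLp {T : ℝ} (f : Lp ℝ 2 (μT T)) (g : ℝ → ℝ) (hg : MemLp g 2 (μT T)) :
    (inner ℝ f (hg.toLp g) : ℝ) = ∫ t, (f : ℝ → ℝ) t * g t ∂(μT T) := by
  rw [inner_Lp_eq]
  exact MeasureTheory.integral_congr_ae (by
    filter_upwards [hg.coeFn_toLp] with t h1
    rw [h1])

lemma vanish_poly_eval {T : ℝ} (f : Lp ℝ 2 (μT T)) (w : ℝ → ℝ)
    (hw : Continuous w) (hw1 : ∀ t, ‖w t‖ ≤ 1)
    (hpow : ∀ m : ℕ, ∫ t, (f : ℝ → ℝ) t * (w t * Real.cos (Real.pi/T*t)^m) ∂(μT T) = 0)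
    (p : Polynomial ℝ) :
    ∫ t, (f : ℝ → ℝ) t * (w t * p.eval (Real.cos (Real.pi/T*t))) ∂(μT T) = 0 := by
  have hint : ∀ m : ℕ, Integrable
      (fun t => (f : ℝ → ℝ) t * (w t * Real.cos (Real.pi/T*t)^m)) (μT T) := by
    intro m
    refine integrable_f_mul f (by fun_prop) 1 (fun t => ?_)
    rw [norm_mul, norm_pow]
    have h2 : ‖Real.cos (Real.pi/T*t)‖^m ≤ 1 :=
      pow_le_one₀ (norm_nonneg _) (by rw [Real.norm_eq_abs]; exact Real.abs_cos_le_one _)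
    calc ‖w t‖ * ‖Real.cos (Real.pi/T*t)‖^m ≤ 1 * 1 :=
          mul_le_mul (hw1 t) h2 (by positivity) one_pos.le
      _ = 1 := by norm_num
  have hrw : ∀ t : ℝ, (f : ℝ → ℝ) t * (w t * p.eval (Real.cos (Real.pi/T*t)))
      = ∑ i ∈ Finset.range (p.natDegree + 1),
          p.coeff i * ((f : ℝ → ℝ) t * (w t * Real.cos (Real.pi/T*t)^i)) := by
    intro t
    rw [Polynomial.eval_eq_sum_range, Finset.mul_sum, Finset.mul_sum]
    congr 1
    ext i
    ring
  simp_rw [hrw]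
  rw [MeasureTheory.integral_finset_sum _ (fun i _ => (hint i).const_mul _)]
  simp_rw [MeasureTheory.integral_const_mul]
  simp [hpow]

lemma vanish_bcf {T : ℝ} (hT : 0 < T) (f : Lp ℝ 2 (μT T)) (w : ℝ → ℝ)
    (hw : Continuous w) (hw1 : ∀ t, ‖w t‖ ≤ 1)
    (hpow : ∀ m : ℕ, ∫ t, (f : ℝ → ℝ) t * (w t * Real.cos (Real.pi/T*t)^m) ∂(μT T) = 0)
    (φ : BoundedContinuousFunction ℝ ℝ) :
    ∫ t, (f : ℝ → ℝ) t * (w t * φ t) ∂(μT T) = 0 := by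
  haveI : CompactSpace (Set.Icc (0:ℝ) T) := isCompact_iff_compactSpace.mp isCompact_Icc
  set X := Set.Icc (0:ℝ) T
  set uX : C(X, ℝ) := ⟨fun x => Real.cos (Real.pi/T * (x:ℝ)), by fun_prop⟩ with huX
  set A : Subalgebra ℝ C(X, ℝ) := Algebra.adjoin ℝ {uX} with hA
  have hsep : A.SeparatesPoints := by
    intro x y hxy
    refine ⟨uX, ⟨uX, Algebra.subset_adjoin (Set.mem_singleton _), rfl⟩, ?_⟩
    simp only [huX, ContinuousMap.coe_mk]
    intro hc
    apply hxy
    have hmem : ∀ z : X, Real.pi/T * (z:ℝ) ∈ Set.Icc 0 Real.pi := by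
      intro z
      have h1 := z.2.1
      have h2 := z.2.2
      constructor
      · positivity
      · calc Real.pi/T * (z:ℝ) ≤ Real.pi/T * T := by
              apply mul_le_mul_of_nonneg_left h2 (by positivity)
          _ = Real.pi := by field_simp
    have := Real.injOn_cos (hmem x) (hmem y) hc
    have hT' : (Real.pi/T) ≠ 0 := by positivity
    ext
    exact mul_left_cancel₀ hT' this
  have hclosure : A.topologicalClosure = ⊤ :=
    ContinuousMap.subalgebra_topologicalClosure_eq_top_of_separatesPoints A hsep
  -- the integral against f of w times anything continuous on X approximated by polynomials in uX
  set I : ℝ := ∫ t, (f : ℝ → ℝ) t * (w t * φ t) ∂(μT T) with hI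
  have hCf : Integrable (fun t => ‖(f : ℝ → ℝ) t‖) (μT T) := (Lp_integrable f).norm
  set Cf : ℝ := ∫ t, ‖(f : ℝ → ℝ) t‖ ∂(μT T) with hCf'
  have hCf0 : 0 ≤ Cf := MeasureTheory.integral_nonneg (fun t => norm_nonneg _)
  have key : ∀ ε : ℝ, 0 < ε → ‖I‖ ≤ ε * Cf := by
    intro ε hε
    -- restrict φ to X
    set φX : C(X, ℝ) := φ.toContinuousMap.restrict X with hφX
    have hmem : φX ∈ closure (A : Set C(X, ℝ)) := by
      have : φX ∈ A.topologicalClosure := by rw [hclosure]; trivial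
      exact this
    obtain ⟨g, hgA, hgd⟩ := Metric.mem_closure_iff.mp hmem ε hε
    obtain ⟨p, hp⟩ : ∃ p : Polynomial ℝ, (Polynomial.aeval uX) p = g := by
      have := hgA
      rw [hA, Algebra.adjoin_singleton_eq_range_aeval] at this
      obtain ⟨p, hp⟩ := this
      exact ⟨p, hp⟩
    -- pointwise bound on Ioo 0 T
    have hpt : ∀ t ∈ Set.Ioo (0:ℝ) T,
        ‖(f : ℝ → ℝ) t * (w t * (φ t - p.eval (Real.cos (Real.pi/T*t))))‖
          ≤ ε * ‖(f : ℝ → ℝ) t‖ := by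
      intro t ht
      have htX : t ∈ X := Set.mem_Icc_of_Ioo ht
      have heval : p.eval (Real.cos (Real.pi/T*t)) = g ⟨t, htX⟩ := by
        rw [← hp, Polynomial.aeval_continuousMap_apply]
        rfl
      have hd : ‖φ t - p.eval (Real.cos (Real.pi/T*t))‖ ≤ ε := by
        rw [heval]
        have h1 : dist (φX ⟨t, htX⟩) (g ⟨t, htX⟩) ≤ dist φX g :=
          ContinuousMap.dist_apply_le_dist _
        have h2 : φX ⟨t, htX⟩ = φ t := rfl
        rw [h2] at h1
        rw [Real.norm_eq_abs, ← Real.dist_eq]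
        exact le_trans h1 hgd.le
      calc ‖(f : ℝ → ℝ) t * (w t * (φ t - p.eval (Real.cos (Real.pi/T*t))))‖
          = ‖(f : ℝ → ℝ) t‖ * (‖w t‖ * ‖φ t - p.eval (Real.cos (Real.pi/T*t))‖) := by
            rw [norm_mul, norm_mul]
        _ ≤ ‖(f : ℝ → ℝ) t‖ * (1 * ε) :=
            mul_le_mul_of_nonneg_left
              (mul_le_mul (hw1 t) hd (norm_nonneg _) one_pos.le) (norm_nonneg _)
        _ = ε * ‖(f : ℝ → ℝ) t‖ := by ring
    -- I equals the integral with φ replaced by φ - p(cos)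
    have hbdd_p : ∃ C, ∀ t : ℝ, ‖p.eval (Real.cos (Real.pi/T*t))‖ ≤ C := by
      obtain ⟨C, hC⟩ := (isCompact_Icc (a := (-1:ℝ)) (b := 1)).exists_bound_of_continuousOn
        (Polynomial.continuous p).continuousOn
      exact ⟨C, fun t => hC _ ⟨neg_one_le_cos _, Real.cos_le_one _⟩⟩
    obtain ⟨Cp, hCp⟩ := hbdd_p
    have hint1 : Integrable (fun t => (f : ℝ → ℝ) t * (w t * φ t)) (μT T) := by
      refine integrable_f_mul f (by fun_prop) (1 * ‖φ‖) (fun t => ?_)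
      rw [norm_mul]
      exact mul_le_mul (hw1 t) (φ.norm_coe_le_norm t) (norm_nonneg _) one_pos.le
    have hint2 : Integrable (fun t => (f : ℝ → ℝ) t
        * (w t * p.eval (Real.cos (Real.pi/T*t)))) (μT T) := by
      refine integrable_f_mul f (by fun_prop) (1 * max Cp 0) (fun t => ?_)
      rw [norm_mul]
      exact mul_le_mul (hw1 t) (le_max_of_le_left (hCp t)) (norm_nonneg _) one_pos.le
    have hInt0 : ∫ t, (f : ℝ → ℝ) t * (w t * p.eval (Real.cos (Real.pi/T*t))) ∂(μT T) = 0 :=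
      vanish_poly_eval f w hw hw1 hpow p
    have hIeq : I = ∫ t, (f : ℝ → ℝ) t
        * (w t * (φ t - p.eval (Real.cos (Real.pi/T*t)))) ∂(μT T) := by
      rw [hI, ← sub_zero (∫ t, (f : ℝ → ℝ) t * (w t * φ t) ∂(μT T)), ← hInt0,
        ← MeasureTheory.integral_sub hint1 hint2]
      congr 1
      ext t
      ring
    rw [hIeq]
    have hbound : ∀ᵐ t ∂(μT T),
        ‖(f : ℝ → ℝ) t * (w t * (φ t - p.eval (Real.cos (Real.pi/T*t))))‖
          ≤ ε * ‖(f : ℝ → ℝ) t‖ := by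
      filter_upwards [MeasureTheory.self_mem_ae_restrict
        (measurableSet_Ioo : MeasurableSet (Set.Ioo (0:ℝ) T))] with t ht
      exact hpt t ht
    calc ‖∫ t, (f : ℝ → ℝ) t * (w t * (φ t - p.eval (Real.cos (Real.pi/T*t)))) ∂(μT T)‖
        ≤ ∫ t, ε * ‖(f : ℝ → ℝ) t‖ ∂(μT T) :=
          MeasureTheory.norm_integral_le_of_norm_le (hCf.const_mul ε) hbound
      _ = ε * Cf := by rw [MeasureTheory.integral_const_mul]
  have : ‖I‖ ≤ 0 := by
    refine le_of_forall_pos_le_add (fun ε hε => ?_)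
    have h1 := key (ε / (Cf + 1)) (by positivity)
    calc ‖I‖ ≤ (ε / (Cf + 1)) * Cf := h1
      _ ≤ ε := by
          rw [div_mul_eq_mul_div, div_le_iff₀ (by positivity)]
          nlinarith
      _ = 0 + ε := by ring
  have := norm_le_zero_iff.mp this
  exact this

lemma ae_mul_zero {T : ℝ} (hT : 0 < T) (f : Lp ℝ 2 (μT T)) (w : ℝ → ℝ)
    (hw : Continuous w) (hw1 : ∀ t, ‖w t‖ ≤ 1)
    (hpow : ∀ m : ℕ, ∫ t, (f : ℝ → ℝ) t * (w t * Real.cos (Real.pi/T*t)^m) ∂(μT T) = 0) :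
    (fun t => (f : ℝ → ℝ) t * w t) =ᵐ[μT T] 0 := by
  have hmem : MemLp (fun t => (f : ℝ → ℝ) t * w t) 2 (μT T) := by
    refine MemLp.of_le_mul (c := 1) (MeasureTheory.Lp.memLp f)
      ((MeasureTheory.Lp.aestronglyMeasurable f).mul hw.aestronglyMeasurable)
      (Filter.Eventually.of_forall fun t => ?_)
    rw [norm_mul, mul_comm (1:ℝ)]
    exact mul_le_mul_of_nonneg_left (hw1 t) (norm_nonneg _)
  set F : Lp ℝ 2 (μT T) := hmem.toLp _ with hF
  have hinner : ∀ φ : BoundedContinuousFunction ℝ ℝ,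
      (inner ℝ F (BoundedContinuousFunction.toLp 2 (μT T) ℝ φ) : ℝ) = 0 := by
    intro φ
    rw [inner_Lp_eq]
    have hcongr : ∀ᵐ t ∂(μT T),
        (F : ℝ → ℝ) t * ((BoundedContinuousFunction.toLp 2 (μT T) ℝ φ : Lp ℝ 2 (μT T)) : ℝ → ℝ) t
          = (f : ℝ → ℝ) t * (w t * φ t) := by
      filter_upwards [hmem.coeFn_toLp, BoundedContinuousFunction.coeFn_toLp 2 (μT T) ℝ φ]
        with t h1 h2
      rw [h1, h2, mul_assoc]
    rw [MeasureTheory.integral_congr_ae hcongr]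
    exact vanish_bcf hT f w hw hw1 hpow φ
  have hdr : DenseRange (BoundedContinuousFunction.toLp (E := ℝ) 2 (μT T) ℝ) :=
    BoundedContinuousFunction.toLp_denseRange ℝ (μT T) ℝ (by norm_num)
  have hall : ∀ y : Lp ℝ 2 (μT T), (inner ℝ F y : ℝ) = 0 := by
    have hcont : Continuous fun y : Lp ℝ 2 (μT T) => (inner ℝ F y : ℝ) :=
      (innerSL ℝ F).continuous
    have heq : (fun y : Lp ℝ 2 (μT T) => (inner ℝ F y : ℝ)) = fun _ => (0:ℝ) := by
      refine Continuous.ext_on hdr hcont continuous_const ?_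
      rintro y ⟨φ, rfl⟩
      exact hinner φ
    intro y
    exact congrFun heq y
  have hF0 : F = 0 := inner_self_eq_zero.mp (hall F)
  have h1 : (fun t => (f : ℝ → ℝ) t * w t) =ᵐ[μT T] (F : ℝ → ℝ) := hmem.coeFn_toLp.symm
  have h2 : (F : ℝ → ℝ) =ᵐ[μT T] 0 := by
    rw [hF0]
    exact MeasureTheory.Lp.coeFn_zero _ _ _
  exact h1.trans h2

lemma eq_zero_of_forall_inner_sL {T : ℝ} (hT : 0 < T) (f : Lp ℝ 2 (μT T))
    (h : ∀ k, (inner ℝ f (sL T k) : ℝ) = 0) : f = 0 := by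
  have hsq : Real.sqrt (2/T) ≠ 0 := by
    refine Real.sqrt_ne_zero'.mpr ?_
    positivity
  have h' : ∀ k, ∫ t, (f : ℝ → ℝ) t * Real.sin (lam k/T*t) ∂(μT T) = 0 := by
    intro k
    have h1 := h k
    rw [sL, inner_Lp_toLp] at h1
    have h2 : ∀ t : ℝ, (f : ℝ → ℝ) t * sFun T k t
        = Real.sqrt (2/T) * ((f : ℝ → ℝ) t * Real.sin (lam k/T*t)) := by
      intro t; rw [sFun_eq]; ring
    simp_rw [h2, MeasureTheory.integral_const_mul] at h1
    exact (mul_eq_zero.mp h1).resolve_left hsq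
  have hpow := vanish_mul_pow_sin f h'
  have hae := ae_mul_zero hT f (fun t => Real.sin (lam 0/T*t))
    (by fun_prop) (fun t => by rw [Real.norm_eq_abs]; exact Real.abs_sin_le_one _)
    (fun m => hpow m 0)
  rw [MeasureTheory.Lp.eq_zero_iff_ae_eq_zero]
  have hIoo : ∀ᵐ t ∂(μT T), t ∈ Set.Ioo (0:ℝ) T :=
    MeasureTheory.self_mem_ae_restrict measurableSet_Ioo
  filter_upwards [hae, hIoo] with t h1 ht
  have hpos : 0 < Real.sin (lam 0/T*t) := by
    apply Real.sin_pos_of_pos_of_lt_pi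
    · have := ht.1; unfold lam; push_cast; positivity
    · have h2 : lam 0/T*t < lam 0 := by
        unfold lam
        push_cast
        rw [div_mul_eq_mul_div, div_lt_iff₀ hT]
        have := ht.2
        nlinarith [Real.pi_pos]
      have h3 : lam 0 < Real.pi := by
        unfold lam; push_cast; nlinarith [Real.pi_pos]
      linarith
  have h4 : (f : ℝ → ℝ) t * Real.sin (lam 0/T*t) = 0 := h1
  simpa using (mul_eq_zero.mp h4).resolve_right (ne_of_gt hpos)

lemma eq_zero_of_forall_inner_cL {T : ℝ} (hT : 0 < T) (f : Lp ℝ 2 (μT T))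
    (h : ∀ k, (inner ℝ f (cL T k) : ℝ) = 0) : f = 0 := by
  have hsq : Real.sqrt (2/T) ≠ 0 := by
    refine Real.sqrt_ne_zero'.mpr ?_
    positivity
  have h' : ∀ k, ∫ t, (f : ℝ → ℝ) t * Real.cos (lam k/T*t) ∂(μT T) = 0 := by
    intro k
    have h1 := h k
    rw [cL, inner_Lp_toLp] at h1
    have h2 : ∀ t : ℝ, (f : ℝ → ℝ) t * cFun T k t
        = Real.sqrt (2/T) * ((f : ℝ → ℝ) t * Real.cos (lam k/T*t)) := by
      intro t; rw [cFun_eq]; ring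
    simp_rw [h2, MeasureTheory.integral_const_mul] at h1
    exact (mul_eq_zero.mp h1).resolve_left hsq
  have hpow := vanish_mul_pow_cos f h'
  have hae := ae_mul_zero hT f (fun t => Real.cos (lam 0/T*t))
    (by fun_prop) (fun t => by rw [Real.norm_eq_abs]; exact Real.abs_cos_le_one _)
    (fun m => hpow m 0)
  rw [MeasureTheory.Lp.eq_zero_iff_ae_eq_zero]
  have hIoo : ∀ᵐ t ∂(μT T), t ∈ Set.Ioo (0:ℝ) T :=
    MeasureTheory.self_mem_ae_restrict measurableSet_Ioo
  filter_upwards [hae, hIoo] with t h1 ht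
  have hpos : 0 < Real.cos (lam 0/T*t) := by
    apply Real.cos_pos_of_mem_Ioo
    constructor
    · have h0 : (0:ℝ) < lam 0/T*t := by
        have := ht.1; unfold lam; push_cast; positivity
      have := Real.pi_pos
      linarith
    · unfold lam
      push_cast
      rw [div_mul_eq_mul_div, div_lt_iff₀ hT]
      have := ht.2
      nlinarith [Real.pi_pos]
  have h4 : (f : ℝ → ℝ) t * Real.cos (lam 0/T*t) = 0 := h1
  simpa using (mul_eq_zero.mp h4).resolve_right (ne_of_gt hpos)

/-- The sine system as a Hilbert basis of `L²(0,T)`. -/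
def bS {T : ℝ} (hT : 0 < T) : HilbertBasis ℕ ℝ (Lp ℝ 2 (μT T)) :=
  HilbertBasis.mkOfOrthogonalEqBot (orthonormal_sL hT) (by
    rw [Submodule.eq_bot_iff]
    intro x hx
    refine eq_zero_of_forall_inner_sL hT x (fun k => ?_)
    rw [real_inner_comm]
    exact (Submodule.mem_orthogonal _ _).mp hx _
      (Submodule.subset_span (Set.mem_range_self k)))

lemma bS_coe {T : ℝ} (hT : 0 < T) : ⇑(bS hT) = sL T :=
  HilbertBasis.coe_mkOfOrthogonalEqBot _ _

/-- The cosine system as a Hilbert basis of `L²(0,T)`. -/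
def bC {T : ℝ} (hT : 0 < T) : HilbertBasis ℕ ℝ (Lp ℝ 2 (μT T)) :=
  HilbertBasis.mkOfOrthogonalEqBot (orthonormal_cL hT) (by
    rw [Submodule.eq_bot_iff]
    intro x hx
    refine eq_zero_of_forall_inner_cL hT x (fun k => ?_)
    rw [real_inner_comm]
    exact (Submodule.mem_orthogonal _ _).mp hx _
      (Submodule.subset_span (Set.mem_range_self k)))

lemma bC_coe {T : ℝ} (hT : 0 < T) : ⇑(bC hT) = cL T :=
  HilbertBasis.coe_mkOfOrthogonalEqBot _ _

lemma HT_hasSum {T : ℝ} (hT : 0 < T) (v : Lp ℝ 2 (μT T)) :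
    HasSum (fun k => (inner ℝ v (sL T k) : ℝ) • cL T k)
      ((bC hT).repr.symm ((bS hT).repr v)) := by
  have h := (bC hT).hasSum_repr_symm ((bS hT).repr v)
  convert h using 2 with k
  rw [bC_coe, HilbertBasis.repr_apply_apply, bS_coe, real_inner_comm]

lemma HT_eq {T : ℝ} (hT : 0 < T) (v : Lp ℝ 2 (μT T)) :
    HT T v = (bC hT).repr.symm ((bS hT).repr v) := by
  rw [HT]
  exact (HT_hasSum hT v).tsum_eq

lemma HTinv_hasSum {T : ℝ} (hT : 0 < T) (w : Lp ℝ 2 (μT T)) :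
    HasSum (fun k => (inner ℝ w (cL T k) : ℝ) • sL T k)
      ((bS hT).repr.symm ((bC hT).repr w)) := by
  have h := (bS hT).hasSum_repr_symm ((bC hT).repr w)
  convert h using 2 with k
  rw [bS_coe, HilbertBasis.repr_apply_apply, bC_coe, real_inner_comm]

lemma HTinv_eq {T : ℝ} (hT : 0 < T) (w : Lp ℝ 2 (μT T)) :
    HTinv T w = (bS hT).repr.symm ((bC hT).repr w) := by
  rw [HTinv]
  exact (HTinv_hasSum hT w).tsum_eq

lemma HTinv_HT {T : ℝ} (hT : 0 < T) (v : Lp ℝ 2 (μT T)) : HTinv T (HT T v) = v := by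
  rw [HT_eq hT, HTinv_eq hT]
  simp

lemma HT_HTinv {T : ℝ} (hT : 0 < T) (w : Lp ℝ 2 (μT T)) : HT T (HTinv T w) = w := by
  rw [HT_eq hT, HTinv_eq hT]
  simp

lemma HT_injective {T : ℝ} (hT : 0 < T) : Function.Injective (HT T) := by
  intro v₁ v₂ h
  have := congrArg (HTinv T) h
  rwa [HTinv_HT hT, HTinv_HT hT] at this

lemma norm_HT {T : ℝ} (hT : 0 < T) (v : Lp ℝ 2 (μT T)) : ‖HT T v‖ = ‖v‖ := by
  rw [HT_eq hT, LinearIsometryEquiv.norm_map, LinearIsometryEquiv.norm_map]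

lemma norm_HTinv {T : ℝ} (hT : 0 < T) (w : Lp ℝ 2 (μT T)) : ‖HTinv T w‖ = ‖w‖ := by
  rw [HTinv_eq hT, LinearIsometryEquiv.norm_map, LinearIsometryEquiv.norm_map]

lemma inner_HT_cL {T : ℝ} (hT : 0 < T) (v : Lp ℝ 2 (μT T)) (k : ℕ) :
    (inner ℝ (HT T v) (cL T k) : ℝ) = (inner ℝ v (sL T k) : ℝ) := by
  rw [real_inner_comm, ← bC_coe hT, ← HilbertBasis.repr_apply_apply, HT_eq hT,
    LinearIsometryEquiv.apply_symm_apply, HilbertBasis.repr_apply_apply, bS_coe,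
    real_inner_comm]

lemma inner_HTinv_sL {T : ℝ} (hT : 0 < T) (w : Lp ℝ 2 (μT T)) (k : ℕ) :
    (inner ℝ (HTinv T w) (sL T k) : ℝ) = (inner ℝ w (cL T k) : ℝ) := by
  rw [real_inner_comm, ← bS_coe hT, ← HilbertBasis.repr_apply_apply, HTinv_eq hT,
    LinearIsometryEquiv.apply_symm_apply, HilbertBasis.repr_apply_apply, bC_coe,
    real_inner_comm]

lemma ext_inner_cL {T : ℝ} (hT : 0 < T) {x y : Lp ℝ 2 (μT T)}
    (h : ∀ k, (inner ℝ x (cL T k) : ℝ) = (inner ℝ y (cL T k) : ℝ)) : x = y := by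
  apply (bC hT).repr.injective
  ext k
  rw [HilbertBasis.repr_apply_apply, HilbertBasis.repr_apply_apply, bC_coe,
    real_inner_comm, h k, real_inner_comm]

lemma int_sin_mul {c : ℝ} (hc : c ≠ 0) (A B : ℝ) :
    ∫ t in A..B, Real.sin (c * t) = (Real.cos (c*A) - Real.cos (c*B))/c := by
  rw [intervalIntegral.integral_comp_mul_left (fun x => Real.sin x) hc]
  simp [integral_sin]
  ring

lemma integral_sFun_interval {T : ℝ} (hT : 0 < T) (k : ℕ) (s : ℝ) :
    ∫ t in s..T, sFun T k t = (T/lam k) * cFun T k s := by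
  have hc : lam k / T ≠ 0 := div_ne_zero (lam_ne k) (ne_of_gt hT)
  have h0 : ∀ t : ℝ, sFun T k t = Real.sqrt (2/T) * Real.sin (lam k/T * t) := sFun_eq T k
  rw [intervalIntegral.integral_congr (fun t _ => h0 t), intervalIntegral.integral_const_mul,
    int_sin_mul hc]
  have h1 : lam k / T * T = lam k := by field_simp
  rw [h1, cos_lam, cFun_eq]
  field_simp
  ring

lemma integral_cFun_interval {T : ℝ} (hT : 0 < T) (k : ℕ) (s : ℝ) :
    ∫ t in (0:ℝ)..s, cFun T k t = (T/lam k) * sFun T k s := by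
  have hc : lam k / T ≠ 0 := div_ne_zero (lam_ne k) (ne_of_gt hT)
  have h0 : ∀ t : ℝ, cFun T k t = Real.sqrt (2/T) * Real.cos (lam k/T * t) := cFun_eq T k
  rw [intervalIntegral.integral_congr (fun t _ => h0 t), intervalIntegral.integral_const_mul,
    int_cos_mul hc]
  rw [sFun_eq]
  simp
  field_simp

lemma inner_primitive_sL {T : ℝ} (hT : 0 < T) (v g : Lp ℝ 2 (μT T))
    (hv : ∀ᵐ t ∂(μT T), (v : ℝ → ℝ) t = ∫ s in (0:ℝ)..t, (g : ℝ → ℝ) s) (k : ℕ) :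
    (inner ℝ v (sL T k) : ℝ) = (T/lam k) * (inner ℝ g (cL T k) : ℝ) := by
  set G := ((g : ℝ → ℝ)) with hG
  set S : Set (ℝ × ℝ) := {p : ℝ × ℝ | p.2 ≤ p.1} with hS'
  have hS : MeasurableSet S := (isClosed_le continuous_snd continuous_fst).measurableSet
  set F : ℝ × ℝ → ℝ := fun p => sFun T k p.1 * G p.2 with hF
  have hFint : Integrable F ((μT T).prod (μT T)) :=
    ((sFun_memLp T k).integrable one_le_two).mul_prod (Lp_integrable g)
  have hint : Integrable (S.indicator F) ((μT T).prod (μT T)) := hFint.indicator hS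
  have hIoo : ∀ᵐ t ∂(μT T), t ∈ Set.Ioo (0:ℝ) T :=
    MeasureTheory.self_mem_ae_restrict measurableSet_Ioo
  rw [sL, inner_Lp_toLp]
  have step1 : ∫ t, (v : ℝ → ℝ) t * sFun T k t ∂(μT T)
      = ∫ t, (∫ s, S.indicator F (t, s) ∂(μT T)) ∂(μT T) := by
    refine MeasureTheory.integral_congr_ae ?_
    filter_upwards [hv, hIoo] with t hvt ht
    have hpt : ∀ s : ℝ, S.indicator F (t, s) = sFun T k t * (Set.Iic t).indicator G s := by
      intro s
      by_cases hst : s ≤ t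
      · rw [Set.indicator_of_mem (by exact hst : (t,s) ∈ S),
          Set.indicator_of_mem (by exact hst : s ∈ Set.Iic t)]
      · rw [Set.indicator_of_notMem (by exact hst : ¬ (t,s) ∈ S),
          Set.indicator_of_notMem (by exact hst : ¬ s ∈ Set.Iic t), mul_zero]
    simp_rw [hpt]
    rw [MeasureTheory.integral_const_mul, MeasureTheory.integral_indicator measurableSet_Iic]
    have hres : (μT T).restrict (Set.Iic t) = volume.restrict (Set.Ioc 0 t) := by
      rw [μT, Measure.restrict_restrict measurableSet_Iic]
      congr 1
      ext s
      simp only [Set.mem_inter_iff, Set.mem_Iic, Set.mem_Ioo, Set.mem_Ioc]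
      constructor
      · rintro ⟨h1, h2, h3⟩; exact ⟨h2, h1⟩
      · rintro ⟨h1, h2⟩; exact ⟨h2, h1, lt_of_le_of_lt h2 ht.2⟩
    rw [hres, ← intervalIntegral.integral_of_le ht.1.le, hvt]
    ring
  have step2 : ∫ t, (∫ s, S.indicator F (t, s) ∂(μT T)) ∂(μT T)
      = ∫ s, (∫ t, S.indicator F (t, s) ∂(μT T)) ∂(μT T) :=
    MeasureTheory.integral_integral_swap (by exact hint)
  have step3 : ∫ s, (∫ t, S.indicator F (t, s) ∂(μT T)) ∂(μT T)
      = ∫ s, (T/lam k) * (G s * cFun T k s) ∂(μT T) := by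
    refine MeasureTheory.integral_congr_ae ?_
    filter_upwards [hIoo] with s hs
    have hpt : ∀ t : ℝ, S.indicator F (t, s) = (Set.Ici s).indicator (sFun T k) t * G s := by
      intro t
      by_cases hst : s ≤ t
      · rw [Set.indicator_of_mem (by exact hst : (t,s) ∈ S),
          Set.indicator_of_mem (by exact hst : t ∈ Set.Ici s)]
      · rw [Set.indicator_of_notMem (by exact hst : ¬ (t,s) ∈ S),
          Set.indicator_of_notMem (by exact hst : ¬ t ∈ Set.Ici s), zero_mul]
    simp_rw [hpt]
    rw [MeasureTheory.integral_mul_const, MeasureTheory.integral_indicator measurableSet_Ici]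
    have hres : (μT T).restrict (Set.Ici s) = volume.restrict (Set.Ico s T) := by
      rw [μT, Measure.restrict_restrict measurableSet_Ici]
      congr 1
      ext t
      simp only [Set.mem_inter_iff, Set.mem_Ici, Set.mem_Ioo, Set.mem_Ico]
      constructor
      · rintro ⟨h1, h2, h3⟩; exact ⟨h1, h3⟩
      · rintro ⟨h1, h2⟩; exact ⟨h1, lt_of_lt_of_le hs.1 h1, h2⟩
    rw [hres, MeasureTheory.integral_Ico_eq_integral_Ioo, ← MeasureTheory.integral_Ioc_eq_integral_Ioo,
      ← intervalIntegral.integral_of_le hs.2.le, integral_sFun_interval hT]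
    ring
  rw [step1, step2, step3, MeasureTheory.integral_const_mul, cL, inner_Lp_toLp]

lemma inner_coprimitive_cL {T : ℝ} (hT : 0 < T) (w h : Lp ℝ 2 (μT T))
    (hw : ∀ᵐ t ∂(μT T), (w : ℝ → ℝ) t = ∫ s in t..T, (h : ℝ → ℝ) s) (k : ℕ) :
    (inner ℝ w (cL T k) : ℝ) = (T/lam k) * (inner ℝ h (sL T k) : ℝ) := by
  set G := ((h : ℝ → ℝ)) with hG
  set S : Set (ℝ × ℝ) := {p : ℝ × ℝ | p.1 ≤ p.2} with hS'
  have hS : MeasurableSet S := (isClosed_le continuous_fst continuous_snd).measurableSet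
  set F : ℝ × ℝ → ℝ := fun p => cFun T k p.1 * G p.2 with hF
  have hFint : Integrable F ((μT T).prod (μT T)) :=
    ((cFun_memLp T k).integrable one_le_two).mul_prod (Lp_integrable h)
  have hint : Integrable (S.indicator F) ((μT T).prod (μT T)) := hFint.indicator hS
  have hIoo : ∀ᵐ t ∂(μT T), t ∈ Set.Ioo (0:ℝ) T :=
    MeasureTheory.self_mem_ae_restrict measurableSet_Ioo
  rw [cL, inner_Lp_toLp]
  have step1 : ∫ t, (w : ℝ → ℝ) t * cFun T k t ∂(μT T)
      = ∫ t, (∫ s, S.indicator F (t, s) ∂(μT T)) ∂(μT T) := by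
    refine MeasureTheory.integral_congr_ae ?_
    filter_upwards [hw, hIoo] with t hwt ht
    have hpt : ∀ s : ℝ, S.indicator F (t, s) = cFun T k t * (Set.Ici t).indicator G s := by
      intro s
      by_cases hst : t ≤ s
      · rw [Set.indicator_of_mem (by exact hst : (t,s) ∈ S),
          Set.indicator_of_mem (by exact hst : s ∈ Set.Ici t)]
      · rw [Set.indicator_of_notMem (by exact hst : ¬ (t,s) ∈ S),
          Set.indicator_of_notMem (by exact hst : ¬ s ∈ Set.Ici t), mul_zero]
    simp_rw [hpt]
    rw [MeasureTheory.integral_const_mul, MeasureTheory.integral_indicator measurableSet_Ici]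
    have hres : (μT T).restrict (Set.Ici t) = volume.restrict (Set.Ico t T) := by
      rw [μT, Measure.restrict_restrict measurableSet_Ici]
      congr 1
      ext s
      simp only [Set.mem_inter_iff, Set.mem_Ici, Set.mem_Ioo, Set.mem_Ico]
      constructor
      · rintro ⟨h1, h2, h3⟩; exact ⟨h1, h3⟩
      · rintro ⟨h1, h2⟩; exact ⟨h1, lt_of_lt_of_le ht.1 h1, h2⟩
    rw [hres, MeasureTheory.integral_Ico_eq_integral_Ioo, ← MeasureTheory.integral_Ioc_eq_integral_Ioo,
      ← intervalIntegral.integral_of_le ht.2.le, hwt]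
    ring
  have step2 : ∫ t, (∫ s, S.indicator F (t, s) ∂(μT T)) ∂(μT T)
      = ∫ s, (∫ t, S.indicator F (t, s) ∂(μT T)) ∂(μT T) :=
    MeasureTheory.integral_integral_swap (by exact hint)
  have step3 : ∫ s, (∫ t, S.indicator F (t, s) ∂(μT T)) ∂(μT T)
      = ∫ s, (T/lam k) * (G s * sFun T k s) ∂(μT T) := by
    refine MeasureTheory.integral_congr_ae ?_
    filter_upwards [hIoo] with s hs
    have hpt : ∀ t : ℝ, S.indicator F (t, s) = (Set.Iic s).indicator (cFun T k) t * G s := by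
      intro t
      by_cases hst : t ≤ s
      · rw [Set.indicator_of_mem (by exact hst : (t,s) ∈ S),
          Set.indicator_of_mem (by exact hst : t ∈ Set.Iic s)]
      · rw [Set.indicator_of_notMem (by exact hst : ¬ (t,s) ∈ S),
          Set.indicator_of_notMem (by exact hst : ¬ t ∈ Set.Iic s), zero_mul]
    simp_rw [hpt]
    rw [MeasureTheory.integral_mul_const, MeasureTheory.integral_indicator measurableSet_Iic]
    have hres : (μT T).restrict (Set.Iic s) = volume.restrict (Set.Ioc 0 s) := by
      rw [μT, Measure.restrict_restrict measurableSet_Iic]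
      congr 1
      ext t
      simp only [Set.mem_inter_iff, Set.mem_Iic, Set.mem_Ioo, Set.mem_Ioc]
      constructor
      · rintro ⟨h1, h2, h3⟩; exact ⟨h2, h1⟩
      · rintro ⟨h1, h2⟩; exact ⟨h2, h1, lt_of_le_of_lt h2 hs.2⟩
    rw [hres, ← intervalIntegral.integral_of_le hs.1.le, integral_cFun_interval hT]
    ring
  rw [step1, step2, step3, MeasureTheory.integral_const_mul, sL, inner_Lp_toLp]

lemma exists_Lp_coprimitive {T : ℝ} (hT : 0 < T) (h : Lp ℝ 2 (μT T)) :
    ∃ w : Lp ℝ 2 (μT T),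
      ∀ᵐ t ∂(μT T), (w : ℝ → ℝ) t = ∫ s in t..T, (h : ℝ → ℝ) s := by
  set ind : ℝ → ℝ := (Set.Ioo (0:ℝ) T).indicator (h : ℝ → ℝ) with hind
  have hind_int : Integrable ind volume := by
    rw [hind, integrable_indicator_iff measurableSet_Ioo]
    exact Lp_integrable h
  have hBcont : Continuous (fun t : ℝ => -(∫ s in T..t, ind s)) :=
    (hind_int.continuous_primitive T).neg
  have hBbd : ∀ t : ℝ, ‖-(∫ s in T..t, ind s)‖ ≤ ∫ s, ‖ind s‖ ∂volume := by
    intro t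
    rw [norm_neg]
    calc ‖∫ s in T..t, ind s‖ ≤ ∫ s in Set.uIoc T t, ‖ind s‖ ∂volume :=
          intervalIntegral.norm_integral_le_integral_norm_uIoc
      _ ≤ ∫ s, ‖ind s‖ ∂volume :=
          MeasureTheory.setIntegral_le_integral hind_int.norm
            (Filter.Eventually.of_forall fun s => norm_nonneg _)
  have hBmem : MemLp (fun t : ℝ => -(∫ s in T..t, ind s)) 2 (μT T) :=
    memLp_of_bounded_continuous hBcont _ hBbd T
  refine ⟨hBmem.toLp _, ?_⟩
  have hIoo : ∀ᵐ t ∂(μT T), t ∈ Set.Ioo (0:ℝ) T :=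
    MeasureTheory.self_mem_ae_restrict measurableSet_Ioo
  filter_upwards [hBmem.coeFn_toLp, hIoo] with t h1 ht
  rw [h1]
  beta_reduce
  rw [intervalIntegral.integral_symm t T, neg_neg]
  rw [intervalIntegral.integral_of_le ht.2.le, intervalIntegral.integral_of_le ht.2.le]
  rw [hind, MeasureTheory.integral_indicator measurableSet_Ioo,
    MeasureTheory.Measure.restrict_restrict measurableSet_Ioo]
  have hset : Set.Ioo 0 T ∩ Set.Ioc t T = Set.Ioo t T := by
    ext s
    simp only [Set.mem_inter_iff, Set.mem_Ioo, Set.mem_Ioc]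
    constructor
    · rintro ⟨⟨h1', h2'⟩, h3', h4'⟩; exact ⟨h3', h2'⟩
    · rintro ⟨h1', h2'⟩; exact ⟨⟨lt_trans ht.1 h1', h2'⟩, h1', le_of_lt h2'⟩
  rw [hset, ← MeasureTheory.integral_Ioc_eq_integral_Ioo]

lemma exists_Lp_primitive {T : ℝ} (hT : 0 < T) (g : Lp ℝ 2 (μT T)) :
    ∃ v : Lp ℝ 2 (μT T),
      ∀ᵐ t ∂(μT T), (v : ℝ → ℝ) t = ∫ s in (0:ℝ)..t, (g : ℝ → ℝ) s := by
  set ind : ℝ → ℝ := (Set.Ioo (0:ℝ) T).indicator (g : ℝ → ℝ) with hind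
  have hind_int : Integrable ind volume := by
    rw [hind, integrable_indicator_iff measurableSet_Ioo]
    exact Lp_integrable g
  have hAcont : Continuous (fun t : ℝ => ∫ s in (0:ℝ)..t, ind s) :=
    hind_int.continuous_primitive 0
  have hAbd : ∀ t : ℝ, ‖∫ s in (0:ℝ)..t, ind s‖ ≤ ∫ s, ‖ind s‖ ∂volume := by
    intro t
    calc ‖∫ s in (0:ℝ)..t, ind s‖ ≤ ∫ s in Set.uIoc (0:ℝ) t, ‖ind s‖ ∂volume :=
          intervalIntegral.norm_integral_le_integral_norm_uIoc
      _ ≤ ∫ s, ‖ind s‖ ∂volume :=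
          MeasureTheory.setIntegral_le_integral hind_int.norm
            (Filter.Eventually.of_forall fun s => norm_nonneg _)
  have hAmem : MemLp (fun t : ℝ => ∫ s in (0:ℝ)..t, ind s) 2 (μT T) :=
    memLp_of_bounded_continuous hAcont _ hAbd T
  refine ⟨hAmem.toLp _, ?_⟩
  have hIoo : ∀ᵐ t ∂(μT T), t ∈ Set.Ioo (0:ℝ) T :=
    MeasureTheory.self_mem_ae_restrict measurableSet_Ioo
  filter_upwards [hAmem.coeFn_toLp, hIoo] with t h1 ht
  rw [h1]
  beta_reduce
  rw [intervalIntegral.integral_of_le ht.1.le, intervalIntegral.integral_of_le ht.1.le]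
  rw [hind, MeasureTheory.integral_indicator measurableSet_Ioo,
    MeasureTheory.Measure.restrict_restrict measurableSet_Ioo]
  have hset : Set.Ioo 0 T ∩ Set.Ioc 0 t = Set.Ioc 0 t := by
    ext s
    simp only [Set.mem_inter_iff, Set.mem_Ioo, Set.mem_Ioc]
    constructor
    · rintro ⟨⟨h1', h2'⟩, h3', h4'⟩; exact ⟨h3', h4'⟩
    · rintro ⟨h1', h2'⟩; exact ⟨⟨h1', lt_of_le_of_lt h2' ht.2⟩, h1', h2'⟩
  rw [hset]
/-- `H_T` maps `H¹_{0,}(0,T)` bijectively onto `H¹_{,0}(0,T)` and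
preserves the `H¹` seminorm: if `∂_t v = g` then `H_T v(t) = ∫_t^T h` with
`‖h‖ = ‖g‖` (so `‖∂_t(H_T v)‖ = ‖∂_t v‖`). -/
theorem HT_bijective_H1_seminorm_preserving (T : ℝ) (hT : 0 < T) :
    (∀ v ∈ H1zero T, HT T v ∈ H1terminal T) ∧
    (∀ v g : Lp ℝ 2 (μT T),
      (∀ᵐ t ∂(μT T), (v : ℝ → ℝ) t = ∫ s in (0 : ℝ)..t, (g : ℝ → ℝ) s) →
      ∃ h : Lp ℝ 2 (μT T),
        (∀ᵐ t ∂(μT T), (HT T v : ℝ → ℝ) t = ∫ s in t..T, (h : ℝ → ℝ) s) ∧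
        ‖h‖ = ‖g‖) ∧
    Set.BijOn (HT T) (H1zero T) (H1terminal T) := by
  have part2 : ∀ v g : Lp ℝ 2 (μT T),
      (∀ᵐ t ∂(μT T), (v : ℝ → ℝ) t = ∫ s in (0:ℝ)..t, (g : ℝ → ℝ) s) →
      ∃ h : Lp ℝ 2 (μT T),
        (∀ᵐ t ∂(μT T), (HT T v : ℝ → ℝ) t = ∫ s in t..T, (h : ℝ → ℝ) s) ∧ ‖h‖ = ‖g‖ := by
    intro v g hv
    obtain ⟨w, hw⟩ := exists_Lp_coprimitive hT (HTinv T g)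
    have hHTv : HT T v = w := by
      apply ext_inner_cL hT
      intro k
      rw [inner_HT_cL hT, inner_primitive_sL hT v g hv k,
        inner_coprimitive_cL hT w (HTinv T g) hw k, inner_HTinv_sL hT]
    refine ⟨HTinv T g, ?_, ?_⟩
    · rw [hHTv]; exact hw
    · exact norm_HTinv hT g
  have part1 : ∀ v ∈ H1zero T, HT T v ∈ H1terminal T := by
    intro v hv
    obtain ⟨g, hg⟩ := hv
    obtain ⟨h, hh, _⟩ := part2 v g hg
    exact ⟨h, hh⟩
  refine ⟨part1, part2, part1, (HT_injective hT).injOn, ?_⟩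
  intro w hw
  obtain ⟨h, hh⟩ := hw
  obtain ⟨v, hv⟩ := exists_Lp_primitive hT (HT T h)
  refine ⟨v, ⟨HT T h, hv⟩, ?_⟩
  apply ext_inner_cL hT
  intro k
  rw [inner_HT_cL hT, inner_primitive_sL hT v (HT T h) hv k, inner_HT_cL hT,
    ← inner_coprimitive_cL hT w h hh k]

end
end

section
/- Let N_t, N_x ∈ ℕ. Let A_t, M_t ∈ ℝ^{N_t×N_t} satisfy xᵀA_t x > 0 and xᵀM_t x > 0 for all x ∈ ℝ^{N_t} with x ≠ 0 (no symmetry assumed), let M_x ∈ ℝ^{N_x×N_x} be symmetric positive definite, and let A_x ∈ ℝ^{N_x×N_x} be symmetric positive semidefinite. Then the matrix K = A_t ⊗ M_x + M_t ⊗ A_x satisfies zᵀKz > 0 for all z ∈ ℝ^{N_t N_x} with z ≠ 0; in particular, K is invertible, so the linear system K𝒜 = 𝒥 of the space-time Galerkin–Bubnov finite element method is uniquely solvable. -/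
open scoped Kronecker
open Matrix
open scoped MatrixOrder

private lemma quad_kron_one {n m : ℕ} (A : Matrix (Fin n) (Fin n) ℝ)
    (w : Fin n × Fin m → ℝ) :
    w ⬝ᵥ (A ⊗ₖ (1 : Matrix (Fin m) (Fin m) ℝ)).mulVec w
      = ∑ k : Fin m, (fun i => w (i, k)) ⬝ᵥ A.mulVec (fun i => w (i, k)) := by
  simp only [dotProduct, Matrix.mulVec, kroneckerMap_apply, Matrix.one_apply,
    Fintype.sum_prod_type, mul_ite, mul_one, mul_zero, ite_mul, zero_mul,
    Finset.sum_ite_eq, Finset.mem_univ, if_true]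
  rw [Finset.sum_comm]

private lemma quad_conj {ι : Type*} [Fintype ι] (P Q : Matrix ι ι ℝ) (z : ι → ℝ) :
    z ⬝ᵥ (Pᵀ * Q * P).mulVec z = (P.mulVec z) ⬝ᵥ Q.mulVec (P.mulVec z) := by
  rw [Matrix.mul_assoc, ← Matrix.mulVec_mulVec, Matrix.dotProduct_mulVec,
    Matrix.vecMul_transpose, ← Matrix.mulVec_mulVec]

private lemma quad_nonneg {n : ℕ} (A : Matrix (Fin n) (Fin n) ℝ)
    (hA : ∀ x : Fin n → ℝ, x ≠ 0 → 0 < x ⬝ᵥ A.mulVec x) (x : Fin n → ℝ) :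
    0 ≤ x ⬝ᵥ A.mulVec x := by
  by_cases hx : x = 0
  · subst hx; simp
  · exact (hA x hx).le

/-- If `A_t, M_t` are positive definite (not necessarily
symmetric), `M_x` is symmetric positive definite and `A_x` is symmetric positive
semidefinite, then `K = A_t ⊗ M_x + M_t ⊗ A_x` satisfies `zᵀKz > 0` for `z ≠ 0`;
in particular `K` is invertible and the linear system `K𝒜 = 𝒥` of the space-time
Galerkin–Bubnov finite element method is uniquely solvable. -/
theorem galerkin_bubnov_system_uniquely_solvable (Nt Nx : ℕ)
    (At Mt : Matrix (Fin Nt) (Fin Nt) ℝ)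
    (Mx Ax : Matrix (Fin Nx) (Fin Nx) ℝ)
    (hAt : ∀ x : Fin Nt → ℝ, x ≠ 0 → 0 < x ⬝ᵥ At.mulVec x)
    (hMt : ∀ x : Fin Nt → ℝ, x ≠ 0 → 0 < x ⬝ᵥ Mt.mulVec x)
    (hMx : Mx.PosDef) (hAx : Ax.PosSemidef) :
    (∀ z : Fin Nt × Fin Nx → ℝ, z ≠ 0 →
      0 < z ⬝ᵥ (At ⊗ₖ Mx + Mt ⊗ₖ Ax).mulVec z) ∧
    IsUnit (At ⊗ₖ Mx + Mt ⊗ₖ Ax) ∧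
    (∀ 𝒥 : Fin Nt × Fin Nx → ℝ,
      ∃! 𝒜 : Fin Nt × Fin Nx → ℝ, (At ⊗ₖ Mx + Mt ⊗ₖ Ax).mulVec 𝒜 = 𝒥) := by
  -- square root factorization of Mx
  set C : Matrix (Fin Nx) (Fin Nx) ℝ := CFC.sqrt Mx with hCdef
  have hCsymm : Cᵀ = C := by
    have := (CFC.sqrt_nonneg Mx).posSemidef.isHermitian
    rwa [Matrix.IsHermitian, Matrix.conjTranspose_eq_transpose_of_trivial] at this
  have hCC : C * C = Mx := CFC.sqrt_mul_sqrt_self Mx hMx.posSemidef.nonneg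
  -- factorization of Ax
  obtain ⟨B, hB⟩ := CStarAlgebra.nonneg_iff_eq_star_mul_self.mp hAx.nonneg
  have hBt : Ax = Bᵀ * B := by rwa [Matrix.star_eq_conjTranspose, Matrix.conjTranspose_eq_transpose_of_trivial] at hB
  -- Kronecker factorizations
  have hfac1 : At ⊗ₖ Mx
      = ((1 : Matrix (Fin Nt) (Fin Nt) ℝ) ⊗ₖ C)ᵀ
        * (At ⊗ₖ (1 : Matrix (Fin Nx) (Fin Nx) ℝ))
        * ((1 : Matrix (Fin Nt) (Fin Nt) ℝ) ⊗ₖ C) := by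
    rw [← kroneckerMap_transpose, Matrix.transpose_one, hCsymm,
      ← Matrix.mul_kronecker_mul, ← Matrix.mul_kronecker_mul]
    simp only [Matrix.one_mul, Matrix.mul_one]
    rw [hCC]
  have hfac2 : Mt ⊗ₖ Ax
      = ((1 : Matrix (Fin Nt) (Fin Nt) ℝ) ⊗ₖ B)ᵀ
        * (Mt ⊗ₖ (1 : Matrix (Fin Nx) (Fin Nx) ℝ))
        * ((1 : Matrix (Fin Nt) (Fin Nt) ℝ) ⊗ₖ B) := by
    rw [← kroneckerMap_transpose, Matrix.transpose_one,
      ← Matrix.mul_kronecker_mul, ← Matrix.mul_kronecker_mul]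
    simp only [Matrix.one_mul, Matrix.mul_one]
    rw [hBt]
  -- (1 ⊗ C) is invertible
  have hCunit : IsUnit ((1 : Matrix (Fin Nt) (Fin Nt) ℝ) ⊗ₖ C) := by
    rw [Matrix.isUnit_iff_isUnit_det, Matrix.det_kronecker, Matrix.det_one, one_pow,
      one_mul]
    have hdet : C.det * C.det = Mx.det := by rw [← Matrix.det_mul, hCC]
    have hC0 : C.det ≠ 0 := by
      intro h
      rw [h, mul_zero] at hdet
      exact (ne_of_gt hMx.det_pos) hdet.symm
    simpa using (Ne.isUnit hC0).pow Nt
  -- positivity of the quadratic form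
  have hquad : ∀ z : Fin Nt × Fin Nx → ℝ, z ≠ 0 →
      0 < z ⬝ᵥ (At ⊗ₖ Mx + Mt ⊗ₖ Ax).mulVec z := by
    intro z hz
    rw [Matrix.add_mulVec, dotProduct_add]
    set w : Fin Nt × Fin Nx → ℝ := ((1 : Matrix (Fin Nt) (Fin Nt) ℝ) ⊗ₖ C).mulVec z
      with hwdef
    have hw : w ≠ 0 := by
      intro h
      apply hz
      have hinj := Matrix.mulVec_injective_iff_isUnit.mpr hCunit
      have : ((1 : Matrix (Fin Nt) (Fin Nt) ℝ) ⊗ₖ C).mulVec z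
          = ((1 : Matrix (Fin Nt) (Fin Nt) ℝ) ⊗ₖ C).mulVec 0 := by
        rw [Matrix.mulVec_zero, ← hwdef, h]
      exact hinj this
    have h1 : 0 < z ⬝ᵥ (At ⊗ₖ Mx).mulVec z := by
      rw [hfac1, quad_conj, ← hwdef, quad_kron_one]
      obtain ⟨⟨i0, k0⟩, hik⟩ := Function.ne_iff.mp hw
      refine Finset.sum_pos' (fun k _ => quad_nonneg At hAt _) ⟨k0, Finset.mem_univ _, ?_⟩
      refine hAt _ (fun h => hik ?_)
      simpa using congrFun h i0
    have h2 : 0 ≤ z ⬝ᵥ (Mt ⊗ₖ Ax).mulVec z := by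
      rw [hfac2, quad_conj, quad_kron_one]
      exact Finset.sum_nonneg fun k _ => quad_nonneg Mt hMt _
    linarith
  -- invertibility
  have hKunit : IsUnit (At ⊗ₖ Mx + Mt ⊗ₖ Ax) := by
    rw [← Matrix.mulVec_injective_iff_isUnit]
    intro x y hxy
    by_contra hne
    have hsub : (At ⊗ₖ Mx + Mt ⊗ₖ Ax).mulVec (x - y) = 0 := by
      rw [Matrix.mulVec_sub, hxy, sub_self]
    have := hquad (x - y) (sub_ne_zero.mpr hne)
    rw [hsub, dotProduct_zero] at this
    exact lt_irrefl 0 this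
  refine ⟨hquad, hKunit, fun 𝒥 => ?_⟩
  have hinj := Matrix.mulVec_injective_iff_isUnit.mpr hKunit
  refine ⟨(At ⊗ₖ Mx + Mt ⊗ₖ Ax)⁻¹.mulVec 𝒥, ?_, fun y hy => hinj ?_⟩
  · simp only [Matrix.mulVec_mulVec]
    rw [Matrix.mul_nonsing_inv _ ((Matrix.isUnit_iff_isUnit_det _).mp hKunit),
      Matrix.one_mulVec]
  · rw [hy]
    simp only [Matrix.mulVec_mulVec]
    rw [Matrix.mul_nonsing_inv _ ((Matrix.isUnit_iff_isUnit_det _).mp hKunit),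
      Matrix.one_mulVec]
end

section
/- Let h > 0 and let ω ⊂ ℝ² be the open triangle with vertices (0,0), (h,0), (0,h) (an isosceles right triangle with legs of length h, area |ω| = h²/2). For every a ∈ ℝ² and b ∈ ℝ, define P(x₁,x₂) = a + b·(−x₂, x₁)ᵀ, a generic element of the lowest-order Nédélec space of the first kind on ω; its scalar curl is curl P = ∂_{x₁}P₂ − ∂_{x₂}P₁ = 2b. Then the inverse inequality ∫_ω (curl P(x))² dx ≤ 18·|ω|^{-1}·∫_ω |P(x)|² dx holds, i.e. ‖curl_x P‖²_{L²(ω)} ≤ c_I · h_ω^{-2} · ‖P‖²_{L²(ω)} with constant c_I = 18 and local mesh size h_ω = |ω|^{1/2}. -/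
open MeasureTheory Set

private lemma poly_int' (p q r s c : ℝ) (hc : 0 ≤ c) :
    ∫ x in Set.Ioo (0:ℝ) c, (p + q*x + r*x^2 + s*x^3) = p*c + q*c^2/2 + r*c^3/3 + s*c^4/4 := by
  rw [← MeasureTheory.integral_Ioc_eq_integral_Ioo, ← intervalIntegral.integral_of_le hc]
  have H : ∀ x ∈ Set.uIcc (0:ℝ) c, HasDerivAt
      (fun x : ℝ => p * x + q * x ^ 2 / 2 + r * x ^ 3 / 3 + s * x ^ 4 / 4)
      (p + q * x + r * x ^ 2 + s * x ^ 3) x := by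
    intro x _
    have h1 : HasDerivAt (fun x : ℝ => p * x) p x := by
      simpa using (hasDerivAt_id x).const_mul p
    have h2 : HasDerivAt (fun x : ℝ => q * x ^ 2 / 2) (q * x) x := by
      have := ((hasDerivAt_pow 2 x).const_mul q).div_const 2
      refine this.congr_deriv ?_; push_cast; ring
    have h3 : HasDerivAt (fun x : ℝ => r * x ^ 3 / 3) (r * x ^ 2) x := by
      have := ((hasDerivAt_pow 3 x).const_mul r).div_const 3
      refine this.congr_deriv ?_; push_cast; ring
    have h4 : HasDerivAt (fun x : ℝ => s * x ^ 4 / 4) (s * x ^ 3) x := by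
      have := ((hasDerivAt_pow 4 x).const_mul s).div_const 4
      refine this.congr_deriv ?_; push_cast; ring
    exact ((h1.add h2).add h3).add h4
  rw [intervalIntegral.integral_eq_sub_of_hasDerivAt H
    ((Continuous.intervalIntegrable (by continuity) _ _))]
  ring

private lemma tri_fubini' (h : ℝ) (f : ℝ × ℝ → ℝ) (hf : Continuous f) :
    ∫ p in regionBetween (fun _ => (0:ℝ)) (fun x => h - x) (Ioo 0 h), f p
      = ∫ x in Ioo (0:ℝ) h, ∫ y in Ioo (0:ℝ) (h - x), f (x, y) := by
  set T := regionBetween (fun _ => (0:ℝ)) (fun x => h - x) (Ioo 0 h) with hT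
  have measT : MeasurableSet T :=
    measurableSet_regionBetween measurable_const (by fun_prop) measurableSet_Ioo
  have hTsub : T ⊆ Ioo (0:ℝ) h ×ˢ Ioo (0:ℝ) h := by
    rintro ⟨x, y⟩ ⟨hx, hy⟩
    simp only [mem_Ioo] at *
    exact ⟨hx, ⟨hy.1, by linarith [hy.2, hx.1]⟩⟩
  have hint : IntegrableOn f T := by
    have hc : IsCompact (Icc ((0:ℝ), (0:ℝ)) (h, h)) := isCompact_Icc
    have : IntegrableOn f (Icc ((0:ℝ), (0:ℝ)) (h, h)) := hf.continuousOn.integrableOn_compact hc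
    exact this.mono_set (hTsub.trans (by
      rintro ⟨x, y⟩ ⟨hx, hy⟩
      simp only [mem_Ioo] at hx hy
      exact ⟨⟨hx.1.le, hy.1.le⟩, ⟨hx.2.le, hy.2.le⟩⟩))
  have hind : Integrable (T.indicator f) := hint.integrable_indicator measT
  have step1 : ∫ p in T, f p = ∫ p in Ioo (0:ℝ) h ×ˢ Ioo (0:ℝ) h, T.indicator f p := by
    rw [setIntegral_indicator measT, Set.inter_eq_self_of_subset_right hTsub]
  rw [step1, Measure.volume_eq_prod, setIntegral_prod _ hind.integrableOn]
  apply setIntegral_congr_fun measurableSet_Ioo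
  intro x hx
  simp only [mem_Ioo] at hx
  have key : ∀ y : ℝ, T.indicator f (x, y) = (Ioo (0:ℝ) (h - x)).indicator (fun y => f (x, y)) y := by
    intro y
    by_cases hy : y ∈ Ioo (0:ℝ) (h - x)
    · rw [indicator_of_mem hy]
      have : (x, y) ∈ T := ⟨by simpa using hx, by simpa using hy⟩
      rw [indicator_of_mem this]
    · rw [indicator_of_notMem hy]
      have : (x, y) ∉ T := by
        intro ⟨_, h2⟩; exact hy (by simpa using h2)
      rw [indicator_of_notMem this]
  simp only [key]
  rw [setIntegral_indicator measurableSet_Ioo,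
    Set.inter_eq_self_of_subset_right (Ioo_subset_Ioo le_rfl (by linarith))]


/-- Inverse inequality with constant `c_I = 18` for the
lowest-order Nédélec element `P(x₁,x₂) = a + b·(−x₂,x₁)ᵀ` (whose scalar curl is
`curl P = 2b`) on the isosceles right triangle `ω` with vertices `(0,0)`, `(h,0)`,
`(0,h)`: the area is `|ω| = h²/2` and
`‖curl_x P‖²_{L²(ω)} ≤ 18 · |ω|⁻¹ · ‖P‖²_{L²(ω)}`. -/
theorem nedelec_inverse_inequality_isosceles_right_triangle
    (h : ℝ) (hh : 0 < h) (a : ℝ × ℝ) (b : ℝ)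
    (ω : Set (ℝ × ℝ))
    (hω : ω = {p : ℝ × ℝ | 0 < p.1 ∧ 0 < p.2 ∧ p.1 + p.2 < h}) :
    (volume ω).toReal = h ^ 2 / 2 ∧
    (∫ x in ω, (2 * b) ^ 2) ≤
      18 * ((volume ω).toReal)⁻¹ *
        ∫ x in ω, ((a.1 - b * x.2) ^ 2 + (a.2 + b * x.1) ^ 2) := by
  have hreg : ω = regionBetween (fun _ => (0:ℝ)) (fun x => h - x) (Ioo 0 h) := by
    rw [hω]; ext ⟨x, y⟩
    simp only [regionBetween, mem_setOf_eq, mem_Ioo]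
    constructor
    · rintro ⟨h1, h2, h3⟩; exact ⟨⟨h1, by linarith⟩, h2, by linarith⟩
    · rintro ⟨⟨h1, _⟩, h2, h3⟩; exact ⟨h1, h2, by linarith⟩
  -- volume computation
  have hvol : volume ω = ENNReal.ofReal (h ^ 2 / 2) := by
    rw [hreg, Measure.volume_eq_prod,
      volume_regionBetween_eq_integral (f := fun _ => (0:ℝ)) (integrable_zero _ _ _).integrableOn
        (by
          have : IntegrableOn (fun x : ℝ => h - x) (Icc 0 h) :=
            (by fun_prop : Continuous fun x : ℝ => h - x).continuousOn.integrableOn_compact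
              isCompact_Icc
          exact this.mono_set Ioo_subset_Icc_self)
        measurableSet_Ioo (fun x hx => by simp only [mem_Ioo] at hx; linarith)]
    congr 1
    have e : ((fun x : ℝ => h - x) - fun _ => (0:ℝ)) = fun x : ℝ => h + (-1)*x + 0*x^2 + 0*x^3 := by
      funext x; simp; ring
    rw [e, poly_int' h (-1) 0 0 h hh.le]; ring
  have area : (volume ω).toReal = h ^ 2 / 2 := by
    rw [hvol, ENNReal.toReal_ofReal (by positivity)]
  refine ⟨area, ?_⟩
  -- constant integral
  have hconst : (∫ x in ω, (2 * b) ^ 2) = h ^ 2 / 2 * (2 * b) ^ 2 := by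
    rw [setIntegral_const, measureReal_def, area, smul_eq_mul]
  -- main integral
  have S2 : (∫ x in ω, ((a.1 - b * x.2) ^ 2 + (a.2 + b * x.1) ^ 2))
      = (a.1^2 + a.2^2) * h^2/2 + (a.2 - a.1) * b * h^3/3 + b^2 * h^4/6 := by
    rw [hreg, tri_fubini' h _ (by fun_prop)]
    have inner : EqOn
        (fun x : ℝ => ∫ y in Ioo (0:ℝ) (h - x), ((a.1 - b * y) ^ 2 + (a.2 + b * x) ^ 2))
        (fun x : ℝ => ((a.1^2+a.2^2)*h - a.1*b*h^2 + b^2*h^3/3)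
          + (2*a.2*b*h + 2*a.1*b*h - (a.1^2+a.2^2) - b^2*h^2) * x
          + (2*b^2*h - 2*a.2*b - a.1*b) * x^2 + (-(4/3)*b^2) * x^3) (Ioo 0 h) := by
      intro x hx
      simp only [mem_Ioo] at hx
      have e1 : (fun y : ℝ => (a.1 - b * y) ^ 2 + (a.2 + b * x) ^ 2)
          = fun y : ℝ => (a.1^2 + (a.2 + b*x)^2) + (-2*a.1*b)*y + b^2*y^2 + 0*y^3 := by
        funext y; ring
      show (∫ y in Ioo (0:ℝ) (h - x), ((a.1 - b * y) ^ 2 + (a.2 + b * x) ^ 2)) = _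
      rw [e1, poly_int' _ _ _ _ _ (by linarith : (0:ℝ) ≤ h - x)]
      ring
    rw [setIntegral_congr_fun measurableSet_Ioo inner,
      poly_int' _ _ _ _ _ hh.le]
    ring
  rw [hconst, S2, area]
  have h2 : (0:ℝ) < h ^ 2 := by positivity
  rw [show (18:ℝ) * (h ^ 2 / 2)⁻¹ *
      ((a.1^2 + a.2^2) * h^2/2 + (a.2 - a.1) * b * h^3/3 + b^2 * h^4/6)
      = 36 * ((a.1^2 + a.2^2) * h^2/2 + (a.2 - a.1) * b * h^3/3 + b^2 * h^4/6) / h^2 by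
    field_simp; ring, le_div_iff₀ h2]
  nlinarith [mul_nonneg (sq_nonneg (3*a.1 - b*h)) (sq_nonneg h),
    mul_nonneg (sq_nonneg (3*a.2 + b*h)) (sq_nonneg h)]
end
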